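/- arXiv:1003.0916 — 4 statements merged into one kernel-verified Lean document; each statement's English description precedes it below -/
import Mathlib

section
/- For coprime integers 1 < n < m, the coefficient of a^{2(n−1)} in the rescaled HOMFLY polynomial P_s(T_{n,m}) equals (−1)^{n−1} · q^{n(n−1)} · binom_{q²}(m−1, n−1) / [n]_{q²}, as an identity in ℚ(q). -/
/-!
Work in the field ℚ(q) of rational functions in one variable `q` over ℚ.
`qNum x j` is the q-integer `[j]_x = (1 - x^j)/(1 - x)`, `qFact x j` the q-factorial,
`qBinom x n k` the Gaussian binomial coefficient (all with base `x`, so that base `q^2`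
gives the `q²`-analogues).  `Ps n m` is the rescaled HOMFLY polynomial of the `(n,m)`
torus knot, a polynomial in the variable `a` (= `Polynomial.X`) over ℚ(q), given by
Jones' formula.
-/

noncomputable def q : RatFunc ℚ := RatFunc.X

noncomputable def qNum (x : RatFunc ℚ) (j : ℕ) : RatFunc ℚ := (1 - x ^ j) / (1 - x)

noncomputable def qFact (x : RatFunc ℚ) (j : ℕ) : RatFunc ℚ :=
  ∏ i ∈ Finset.range j, qNum x (i + 1)

noncomputable def qBinom (x : RatFunc ℚ) (n k : ℕ) : RatFunc ℚ :=
  qFact x n / (qFact x k * qFact x (n - k))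

/-- Jones' formula for the rescaled HOMFLY polynomial of the `(n,m)` torus knot,
as a polynomial in `a` (= `Polynomial.X`) over `ℚ(q)`. -/
noncomputable def Ps (n m : ℕ) : Polynomial (RatFunc ℚ) :=
  Polynomial.C ((1 - q ^ 2) / (1 - q ^ (2 * n))) *
    ∑ b ∈ Finset.range n,
      Polynomial.C (q ^ (2 * m * b)) *
        (∏ i ∈ Finset.range (n - 1 - b),
          Polynomial.C ((q ^ (2 * (i + 1)) - 1)⁻¹) *
            (Polynomial.C (q ^ (2 * (i + 1))) * Polynomial.X ^ 2 - 1)) *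
        ∏ j ∈ Finset.range b,
          Polynomial.C ((1 - q ^ (2 * (j + 1)))⁻¹) *
            (Polynomial.X ^ 2 - Polynomial.C (q ^ (2 * (j + 1))))


open Finset Polynomial

variable {K : Type*} [Field K]

/-- q-Pochhammer-like product. -/
noncomputable def gg (u : K) (N : ℕ) : K := ∏ i ∈ Finset.range N, (1 - u ^ (2 * (i + 1)))

/-- Gaussian binomial defined by Pascal recursion (in base u^2). -/
noncomputable def GG (u : K) : ℕ → ℕ → K
  | 0, 0 => 1
  | 0, _ + 1 => 0
  | _ + 1, 0 => 1
  | N + 1, b + 1 => GG u N (b + 1) + u ^ (2 * (N - b)) * GG u N b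

lemma GG_eq_zero (u : K) : ∀ N b, N < b → GG u N b = 0 := by
  intro N
  induction N with
  | zero => intro b hb; match b, hb with | b + 1, _ => rfl
  | succ N ih =>
    intro b hb
    match b, hb with
    | b + 1, hb =>
      show GG u N (b + 1) + u ^ (2 * (N - b)) * GG u N b = 0
      rw [ih _ (by omega), ih _ (by omega)]; ring

lemma GG_diag (u : K) : ∀ N, GG u N N = 1 := by
  intro N
  induction N with
  | zero => rfl
  | succ N ih =>
    show GG u N (N + 1) + u ^ (2 * (N - N)) * GG u N N = 1
    rw [GG_eq_zero u N (N+1) (by omega), ih, Nat.sub_self]; ring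

lemma gg_succ (u : K) (N : ℕ) : gg u (N + 1) = gg u N * (1 - u ^ (2 * (N + 1))) := by
  rw [gg, Finset.prod_range_succ]; rfl

lemma GG_mul_gg (u : K) : ∀ N b, b ≤ N → GG u N b * (gg u b * gg u (N - b)) = gg u N := by
  intro N
  induction N with
  | zero =>
    intro b hb
    interval_cases b
    show (1 : K) * (gg u 0 * gg u 0) = gg u 0
    simp [gg]
  | succ N ih =>
    intro b hb
    match b with
    | 0 =>
      show (1 : K) * (gg u 0 * gg u (N + 1 - 0)) = gg u (N + 1)
      simp [gg]
    | c + 1 =>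
      show (GG u N (c + 1) + u ^ (2 * (N - c)) * GG u N c) * (gg u (c + 1) * gg u (N + 1 - (c + 1))) = gg u (N + 1)
      have hNc : N + 1 - (c + 1) = N - c := by omega
      rw [hNc]
      rcases Nat.lt_or_ge c N with hc | hc
      · -- c + 1 ≤ N
        have h1 := ih (c + 1) (by omega)
        have h2 := ih c (by omega)
        have e1 : N - c = (N - (c + 1)) + 1 := by omega
        have e2 : gg u (N - c) = gg u (N - (c+1)) * (1 - u ^ (2 * (N - c))) := by
          rw [e1, gg_succ, ← e1]
        have e3 : gg u (c + 1) = gg u c * (1 - u ^ (2 * (c + 1))) := gg_succ u c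
        have key : gg u (N + 1) = gg u N * (1 - u ^ (2 * (N + 1))) := gg_succ u N
        have hexp : 2 * (N - c) + 2 * (c + 1) = 2 * (N + 1) := by omega
        have hpow : u ^ (2 * (N - c)) * u ^ (2 * (c + 1)) = u ^ (2 * (N + 1)) := by
          rw [← pow_add, hexp]
        have t1 : GG u N (c+1) * (gg u (c+1) * gg u (N-c)) = gg u N * (1 - u ^ (2 * (N - c))) := by
          rw [e2]; linear_combination (1 - u ^ (2 * (N - c))) * h1
        have t2 : u ^ (2 * (N - c)) * GG u N c * (gg u (c+1) * gg u (N-c))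
            = gg u N * (u ^ (2 * (N - c)) * (1 - u ^ (2 * (c + 1)))) := by
          rw [e3]; linear_combination u ^ (2 * (N - c)) * (1 - u ^ (2 * (c + 1))) * h2
        linear_combination t1 + t2 - key - gg u N * hpow
      · -- c = N
        have hcN : c = N := by omega
        subst hcN
        rw [GG_eq_zero u c (c+1) (by omega), GG_diag, Nat.sub_self]
        show (0 + u ^ (2 * 0) * 1) * (gg u (c + 1) * gg u 0) = gg u (c + 1)
        simp [gg]

lemma qbt (u z : K) : ∀ N, ∏ k ∈ Finset.range N, (1 + z * u ^ (2 * k))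
    = ∑ b ∈ Finset.range (N + 1), GG u N b * z ^ b * u ^ (b * (b - 1)) := by
  intro N
  induction N with
  | zero => simp [GG]
  | succ N ih =>
    rw [Finset.prod_range_succ, ih]
    rw [Finset.sum_range_succ' (fun b => GG u (N+1) b * z ^ b * u ^ (b * (b-1))) (N+1)]
    have step : ∀ b, GG u (N+1) (b+1) = GG u N (b+1) + u ^ (2 * (N - b)) * GG u N b :=
      fun b => rfl
    have expand : ∑ b ∈ Finset.range (N + 1), GG u (N+1) (b+1) * z ^ (b+1) * u ^ ((b+1) * (b+1-1))
        = (∑ b ∈ Finset.range (N + 1), GG u N (b+1) * z ^ (b+1) * u ^ ((b+1) * (b+1-1)))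
          + ∑ b ∈ Finset.range (N + 1), (z * u ^ (2*N)) * (GG u N b * z ^ b * u ^ (b * (b-1))) := by
      rw [← Finset.sum_add_distrib]
      refine Finset.sum_congr rfl (fun b hb => ?_)
      have hbN : b ≤ N := by simpa using Nat.lt_succ_iff.mp (Finset.mem_range.mp hb)
      rw [step]
      have hexp : 2 * (N - b) + (b + 1) * b = 2 * N + b * (b - 1) := by
        cases b with
        | zero => simp
        | succ c =>
          have h1 : (c+1+1) * (c+1) = (c+1) * c + 2 * (c+1) := by ring
          have h2 : (c+1) * (c+1-1) = (c+1) * c := by simp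
          rw [h1, h2]; omega
      have : u ^ (2 * (N - b)) * u ^ ((b+1) * (b+1-1)) = u ^ (2*N) * u ^ (b * (b-1)) := by
        simp only [Nat.add_sub_cancel, ← pow_add, hexp]
      calc (GG u N (b+1) + u ^ (2 * (N - b)) * GG u N b) * z ^ (b+1) * u ^ ((b+1) * (b+1-1))
          = GG u N (b+1) * z ^ (b+1) * u ^ ((b+1) * (b+1-1))
            + (GG u N b * z ^ b) * z * (u ^ (2 * (N - b)) * u ^ ((b+1) * (b+1-1))) := by ring
        _ = _ := by rw [this]; ring
    rw [expand]
    have first : (∑ b ∈ Finset.range (N + 1), GG u N (b+1) * z ^ (b+1) * u ^ ((b+1) * (b+1-1)))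
        + GG u (N+1) 0 * z ^ 0 * u ^ (0 * (0-1))
        = ∑ b ∈ Finset.range (N + 2), GG u N b * z ^ b * u ^ (b * (b-1)) := by
      rw [Finset.sum_range_succ' (fun b => GG u N b * z ^ b * u ^ (b * (b-1))) (N+1)]
      have h0 : GG u (N+1) 0 = GG u N 0 := by cases N <;> rfl
      rw [h0]
    have second : ∑ b ∈ Finset.range (N + 2), GG u N b * z ^ b * u ^ (b * (b-1))
        = ∑ b ∈ Finset.range (N + 1), GG u N b * z ^ b * u ^ (b * (b-1)) := by
      rw [Finset.sum_range_succ, GG_eq_zero u N (N+1) (by omega)]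
      ring
    have mulsum : ∑ b ∈ Finset.range (N + 1), (z * u ^ (2*N)) * (GG u N b * z ^ b * u ^ (b * (b-1)))
        = (z * u ^ (2*N)) * ∑ b ∈ Finset.range (N + 1), GG u N b * z ^ b * u ^ (b * (b-1)) := by
      rw [Finset.mul_sum]
    linear_combination (-1 : K) * first - second - mulsum

lemma one_sub_q_pow_ne (k : ℕ) (hk : 1 ≤ k) : (1 : RatFunc ℚ) - q ^ k ≠ 0 := by
  intro h
  have hq : (q : RatFunc ℚ) ^ k = 1 := by linear_combination -h
  have : (algebraMap (Polynomial ℚ) (RatFunc ℚ)) (Polynomial.X ^ k)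
      = (algebraMap (Polynomial ℚ) (RatFunc ℚ)) 1 := by
    rw [map_pow, map_one, RatFunc.algebraMap_X]
    exact hq
  have hX : (Polynomial.X : Polynomial ℚ) ^ k = 1 :=
    IsFractionRing.injective (Polynomial ℚ) (RatFunc ℚ) this
  have := congrArg Polynomial.natDegree hX
  rw [Polynomial.natDegree_X_pow, Polynomial.natDegree_one] at this
  omega

lemma gg_q_ne_zero (N : ℕ) : gg q N ≠ 0 := by
  rw [gg]
  exact Finset.prod_ne_zero_iff.mpr fun i _ => one_sub_q_pow_ne (2 * (i + 1)) (by omega)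

lemma sum_two (k : ℕ) : ∑ i ∈ Finset.range k, 2 * (i + 1) = k * (k + 1) := by
  induction k with
  | zero => simp
  | succ e ih => rw [Finset.sum_range_succ, ih]; ring

lemma exp_key (b c D : ℕ) :
    (b + c) * ((b + c) + 1) + (2 * (D + 1) * b + b * (b - 1))
      = 2 * ((b + c + 1 + D) * b) + c * (c + 1) := by
  cases b with
  | zero => ring
  | succ e =>
    have h : (e + 1) * ((e + 1) - 1) = (e + 1) * e := by simp
    rw [h]; ring

lemma sign_split {K : Type*} [Field K] (N b : ℕ) (hb : b ≤ N) :
    ((-1 : K)) ^ (N - b) = (-1) ^ N * (-1) ^ b := by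
  have h1 : ((-1 : K)) ^ N = (-1) ^ (N - b) * (-1) ^ b := by
    rw [← pow_add]; congr 1; omega
  have h2 : ((-1 : K)) ^ b * (-1) ^ b = 1 := by
    rw [← pow_add, show b + b = 2 * b from by omega, pow_mul]; simp
  rw [h1, mul_assoc, h2, mul_one]

lemma qFact_eq (j : ℕ) : qFact (q ^ 2) j = gg q j / (1 - q ^ 2) ^ j := by
  rw [qFact, gg]
  calc ∏ i ∈ Finset.range j, qNum (q ^ 2) (i + 1)
      = ∏ i ∈ Finset.range j, (1 - q ^ (2 * (i + 1))) / (1 - q ^ 2) := by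
        refine Finset.prod_congr rfl fun i _ => ?_
        rw [qNum, pow_mul]
    _ = (∏ i ∈ Finset.range j, (1 - q ^ (2 * (i + 1)))) / (1 - q ^ 2) ^ j := by
        rw [Finset.prod_div_distrib, Finset.prod_const, Finset.card_range]

lemma gg_add (u : RatFunc ℚ) (A B : ℕ) :
    gg u (A + B) = gg u A * ∏ k ∈ Finset.range B, (1 - u ^ (2 * (A + 1 + k))) := by
  rw [gg, gg, Finset.prod_range_add]
  congr 1
  refine Finset.prod_congr rfl fun k _ => ?_
  congr 2
  omega

lemma core (N D : ℕ) :
    ∑ b ∈ Finset.range (N + 1),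
        (-1 : RatFunc ℚ) ^ N *
          ((-1) ^ b * q ^ (2 * ((N + 1 + D) * b)) * q ^ ((N - b) * (N - b + 1)) * GG q N b)
      = (-1) ^ N * q ^ (N * (N + 1)) * ∏ k ∈ Finset.range N, (1 - q ^ (2 * (D + 1 + k))) := by
  have hq := qbt q (-(q ^ (2 * (D + 1)))) N
  have hprod : ∏ k ∈ Finset.range N, (1 + -(q ^ (2 * (D + 1))) * q ^ (2 * k))
      = ∏ k ∈ Finset.range N, (1 - q ^ (2 * (D + 1 + k))) := by
    refine Finset.prod_congr rfl fun k _ => ?_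
    rw [show 2 * (D + 1 + k) = 2 * (D + 1) + 2 * k from by omega, pow_add]
    ring
  calc ∑ b ∈ Finset.range (N + 1),
        (-1 : RatFunc ℚ) ^ N *
          ((-1) ^ b * q ^ (2 * ((N + 1 + D) * b)) * q ^ ((N - b) * (N - b + 1)) * GG q N b)
      = ∑ b ∈ Finset.range (N + 1),
          ((-1 : RatFunc ℚ) ^ N * q ^ (N * (N + 1))) *
            (GG q N b * (-(q ^ (2 * (D + 1)))) ^ b * q ^ (b * (b - 1))) := by
        refine Finset.sum_congr rfl fun b hb => ?_
        have hbN : b ≤ N := by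
          have := Finset.mem_range.mp hb; omega
        obtain ⟨c, rfl⟩ : ∃ c, N = b + c := ⟨N - b, by omega⟩
        have hc : b + c - b = c := by omega
        rw [hc]
        have hexp := exp_key b c D
        calc (-1 : RatFunc ℚ) ^ (b + c) *
              ((-1) ^ b * q ^ (2 * ((b + c + 1 + D) * b)) * q ^ (c * (c + 1)) * GG q (b + c) b)
            = ((-1 : RatFunc ℚ) ^ (b + c) * (-1) ^ b * GG q (b + c) b) *
                q ^ (2 * ((b + c + 1 + D) * b) + c * (c + 1)) := by
              rw [pow_add]; ring
          _ = ((-1 : RatFunc ℚ) ^ (b + c) * (-1) ^ b * GG q (b + c) b) *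
                q ^ ((b + c) * ((b + c) + 1) + (2 * (D + 1) * b + b * (b - 1))) := by
              rw [hexp]
          _ = _ := by
              rw [neg_pow (q ^ (2 * (D + 1))) b, ← pow_mul q (2 * (D + 1)) b, pow_add, pow_add]; ring
    _ = ((-1 : RatFunc ℚ) ^ N * q ^ (N * (N + 1))) *
          ∑ b ∈ Finset.range (N + 1),
            (GG q N b * (-(q ^ (2 * (D + 1)))) ^ b * q ^ (b * (b - 1))) := by
        rw [← Finset.mul_sum]
    _ = _ := by rw [← hq, hprod, mul_assoc]

lemma factA_deg (u v : RatFunc ℚ) :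
    (Polynomial.C u * (Polynomial.C v * Polynomial.X ^ 2 - 1)).natDegree ≤ 2 := by
  refine (Polynomial.natDegree_mul_le).trans ?_
  rw [Polynomial.natDegree_C, zero_add]
  refine (Polynomial.natDegree_sub_le _ _).trans ?_
  refine max_le ((Polynomial.natDegree_C_mul_le _ _).trans ?_) (by simp)
  simp

lemma factB_deg (u v : RatFunc ℚ) :
    (Polynomial.C u * (Polynomial.X ^ 2 - Polynomial.C v)).natDegree ≤ 2 := by
  refine (Polynomial.natDegree_mul_le).trans ?_
  rw [Polynomial.natDegree_C, zero_add]
  refine (Polynomial.natDegree_sub_le _ _).trans ?_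
  simp

lemma factA_coeff (u v : RatFunc ℚ) :
    (Polynomial.C u * (Polynomial.C v * Polynomial.X ^ 2 - 1)).coeff 2 = u * v := by
  simp [Polynomial.coeff_C_mul, Polynomial.coeff_sub, Polynomial.coeff_one,
    Polynomial.coeff_X_pow]

lemma factB_coeff (u v : RatFunc ℚ) :
    (Polynomial.C u * (Polynomial.X ^ 2 - Polynomial.C v)).coeff 2 = u := by
  simp [Polynomial.coeff_C_mul, Polynomial.coeff_sub, Polynomial.coeff_X_pow,
    Polynomial.coeff_C]

lemma prod_deg {ι : Type*} (s : Finset ι) (f : ι → Polynomial (RatFunc ℚ))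
    (h : ∀ i ∈ s, (f i).natDegree ≤ 2) : (∏ i ∈ s, f i).natDegree ≤ s.card * 2 := by
  refine le_trans (Polynomial.natDegree_prod_le s f) ?_
  calc ∑ i ∈ s, (f i).natDegree ≤ ∑ i ∈ s, 2 := Finset.sum_le_sum h
    _ = s.card * 2 := by rw [Finset.sum_const, smul_eq_mul]

lemma term_coeff (N b mm : ℕ) (hb : b ≤ N) :
    (Polynomial.C (q ^ (2 * mm * b)) *
        (∏ i ∈ Finset.range (N - b),
          Polynomial.C ((q ^ (2 * (i + 1)) - 1)⁻¹) *
            (Polynomial.C (q ^ (2 * (i + 1))) * Polynomial.X ^ 2 - 1)) *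
        ∏ j ∈ Finset.range b,
          Polynomial.C ((1 - q ^ (2 * (j + 1)))⁻¹) *
            (Polynomial.X ^ 2 - Polynomial.C (q ^ (2 * (j + 1))))).coeff (2 * N)
      = q ^ (2 * mm * b) *
          (∏ i ∈ Finset.range (N - b), (q ^ (2 * (i + 1)) - 1)⁻¹ * q ^ (2 * (i + 1))) *
          ∏ j ∈ Finset.range b, (1 - q ^ (2 * (j + 1)))⁻¹ := by
  rw [mul_assoc, Polynomial.coeff_C_mul]
  have h2N : 2 * N = (N - b) * 2 + b * 2 := by omega
  rw [h2N]
  have hP : (∏ i ∈ Finset.range (N - b),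
      Polynomial.C ((q ^ (2 * (i + 1)) - 1)⁻¹) *
        (Polynomial.C (q ^ (2 * (i + 1))) * Polynomial.X ^ 2 - 1)).natDegree ≤ (N - b) * 2 := by
    have h := prod_deg (Finset.range (N - b))
      (fun i => Polynomial.C ((q ^ (2 * (i + 1)) - 1)⁻¹) *
        (Polynomial.C (q ^ (2 * (i + 1))) * Polynomial.X ^ 2 - 1))
      (fun i _ => factA_deg _ _)
    rwa [Finset.card_range] at h
  have hQ : (∏ j ∈ Finset.range b,
      Polynomial.C ((1 - q ^ (2 * (j + 1)))⁻¹) *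
        (Polynomial.X ^ 2 - Polynomial.C (q ^ (2 * (j + 1))))).natDegree ≤ b * 2 := by
    have h := prod_deg (Finset.range b)
      (fun j => Polynomial.C ((1 - q ^ (2 * (j + 1)))⁻¹) *
        (Polynomial.X ^ 2 - Polynomial.C (q ^ (2 * (j + 1)))))
      (fun j _ => factB_deg _ _)
    rwa [Finset.card_range] at h
  rw [Polynomial.coeff_mul_add_eq_of_natDegree_le hP hQ]
  rw [show (N - b) * 2 = (Finset.range (N - b)).card * 2 from by simp,
    Polynomial.coeff_prod_of_natDegree_le _ _ _ (fun i _ => factA_deg _ _)]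
  rw [show b * 2 = (Finset.range b).card * 2 from by simp,
    Polynomial.coeff_prod_of_natDegree_le _ _ _ (fun j _ => factB_deg _ _)]
  have e1 : (∏ i ∈ Finset.range (N - b),
      (Polynomial.C ((q ^ (2 * (i + 1)) - 1)⁻¹) *
        (Polynomial.C (q ^ (2 * (i + 1))) * Polynomial.X ^ 2 - 1)).coeff 2)
      = ∏ i ∈ Finset.range (N - b), (q ^ (2 * (i + 1)) - 1)⁻¹ * q ^ (2 * (i + 1)) :=
    Finset.prod_congr rfl fun i _ => factA_coeff _ _
  have e2 : (∏ j ∈ Finset.range b,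
      (Polynomial.C ((1 - q ^ (2 * (j + 1)))⁻¹) *
        (Polynomial.X ^ 2 - Polynomial.C (q ^ (2 * (j + 1))))).coeff 2)
      = ∏ j ∈ Finset.range b, (1 - q ^ (2 * (j + 1)))⁻¹ :=
    Finset.prod_congr rfl fun j _ => factB_coeff _ _
  rw [e1, e2, ← mul_assoc]

lemma prodA_val (k : ℕ) :
    (∏ i ∈ Finset.range k, (q ^ (2 * (i + 1)) - 1)⁻¹ * q ^ (2 * (i + 1)))
      = (-1) ^ k * q ^ (k * (k + 1)) * (gg q k)⁻¹ := by
  rw [Finset.prod_mul_distrib, Finset.prod_inv_distrib]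
  have h1 : ∏ i ∈ Finset.range k, (q ^ (2 * (i + 1)) - 1)
      = (-1) ^ k * gg q k := by
    calc ∏ i ∈ Finset.range k, (q ^ (2 * (i + 1)) - 1)
        = ∏ i ∈ Finset.range k, (-1) * (1 - q ^ (2 * (i + 1))) := by
          refine Finset.prod_congr rfl fun i _ => ?_; ring
      _ = (-1) ^ k * gg q k := by
          rw [Finset.prod_mul_distrib, Finset.prod_const, Finset.card_range, gg]
  have h2 : ∏ i ∈ Finset.range k, q ^ (2 * (i + 1)) = q ^ (k * (k + 1)) := by
    rw [Finset.prod_pow_eq_pow_sum, sum_two]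
  rw [h1, h2, mul_inv]
  have h3 : ((-1 : RatFunc ℚ) ^ k)⁻¹ = (-1) ^ k := by
    rw [← inv_pow]; norm_num
  rw [h3]; ring

lemma prodB_val (k : ℕ) :
    (∏ j ∈ Finset.range k, (1 - q ^ (2 * (j + 1)))⁻¹) = (gg q k)⁻¹ := by
  rw [Finset.prod_inv_distrib, gg]

lemma qBinom_eq (N D : ℕ) :
    qBinom (q ^ 2) (N + D) N = gg q (N + D) / (gg q N * gg q D) := by
  rw [qBinom, Nat.add_sub_cancel_left, qFact_eq, qFact_eq, qFact_eq]
  have hc : (1 : RatFunc ℚ) - q ^ 2 ≠ 0 := one_sub_q_pow_ne 2 (by omega)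
  have hpow : (1 - q ^ 2 : RatFunc ℚ) ^ N * (1 - q ^ 2) ^ D = (1 - q ^ 2) ^ (N + D) := by
    rw [← pow_add]
  rw [div_mul_div_comm, hpow, div_div_eq_mul_div,
    div_mul_cancel₀ _ (pow_ne_zero _ hc)]

/-- For coprime `1 < n < m`, the coefficient of `a^{2(n-1)}` (the top term) of the
rescaled HOMFLY polynomial of the `(n,m)` torus knot equals
`(-1)^{n-1} q^{n(n-1)} binom_{q²}(m-1, n-1) / [n]_{q²}`. -/
theorem coeff_Ps_top (n m : ℕ) (hn : 1 < n) (hm : n < m) (hco : Nat.Coprime n m) :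
    (Ps n m).coeff (2 * (n - 1)) =
      (-1) ^ (n - 1) * q ^ (n * (n - 1)) * qBinom (q ^ 2) (m - 1) (n - 1) /
        qNum (q ^ 2) n := by

  obtain ⟨N, rfl⟩ : ∃ N, n = N + 1 := ⟨n - 1, by omega⟩
  obtain ⟨D, rfl⟩ : ∃ D, m = N + 1 + D := ⟨m - (N + 1), by omega⟩
  have hn1 : N + 1 - 1 = N := by omega
  have hm1 : N + 1 + D - 1 = N + D := by omega
  rw [hn1, hm1]
  rw [Ps, Polynomial.coeff_C_mul, Polynomial.finset_sum_coeff]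
  have hsum : ∑ b ∈ Finset.range (N + 1),
      (Polynomial.C (q ^ (2 * (N + 1 + D) * b)) *
        (∏ i ∈ Finset.range (N + 1 - 1 - b),
          Polynomial.C ((q ^ (2 * (i + 1)) - 1)⁻¹) *
            (Polynomial.C (q ^ (2 * (i + 1))) * Polynomial.X ^ 2 - 1)) *
        ∏ j ∈ Finset.range b,
          Polynomial.C ((1 - q ^ (2 * (j + 1)))⁻¹) *
            (Polynomial.X ^ 2 - Polynomial.C (q ^ (2 * (j + 1))))).coeff (2 * N)
      = ∑ b ∈ Finset.range (N + 1),
          ((-1 : RatFunc ℚ) ^ N *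
            ((-1) ^ b * q ^ (2 * ((N + 1 + D) * b)) * q ^ ((N - b) * (N - b + 1)) * GG q N b))
            * (gg q N)⁻¹ := by
    refine Finset.sum_congr rfl fun b hb => ?_
    have hb' : b ≤ N := by have := Finset.mem_range.mp hb; omega
    have hnb : N + 1 - 1 - b = N - b := by omega
    rw [hnb, term_coeff N b (N + 1 + D) hb', prodA_val, prodB_val, sign_split N b hb']
    have hginv : (gg q (N - b))⁻¹ * (gg q b)⁻¹ = GG q N b * (gg q N)⁻¹ := by
      have h := GG_mul_gg q N b hb'
      have h1 := gg_q_ne_zero b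
      have h2 := gg_q_ne_zero (N - b)
      have h3 := gg_q_ne_zero N
      field_simp
      linear_combination -h
    have hexp2 : 2 * (N + 1 + D) * b = 2 * ((N + 1 + D) * b) := by rw [Nat.mul_assoc]
    rw [hexp2]
    linear_combination ((-1 : RatFunc ℚ) ^ N * (-1) ^ b * q ^ (2 * ((N + 1 + D) * b)) *
      q ^ ((N - b) * (N - b + 1))) * hginv
  rw [hsum, ← Finset.sum_mul, core N D]
  rw [qBinom_eq N D, qNum]
  have hgg : gg q (N + D) = gg q D * ∏ k ∈ Finset.range N, (1 - q ^ (2 * (D + 1 + k))) := by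
    rw [show N + D = D + N from Nat.add_comm N D, gg_add]
  rw [hgg]
  have hpm : ((q : RatFunc ℚ) ^ 2) ^ (N + 1) = q ^ (2 * (N + 1)) := (pow_mul q 2 (N + 1)).symm
  rw [hpm, show (N + 1) * N = N * (N + 1) from Nat.mul_comm _ _]
  have h2 : (1 : RatFunc ℚ) - q ^ 2 ≠ 0 := one_sub_q_pow_ne 2 (by omega)
  have h2N1 : (1 : RatFunc ℚ) - q ^ (2 * (N + 1)) ≠ 0 := one_sub_q_pow_ne _ (by omega)
  have hgN := gg_q_ne_zero N
  have hgD := gg_q_ne_zero D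
  field_simp
end

section
/- For integers m, n ≥ 1 and k ≥ 0, the number of lattice paths from (0,0) to (m,n) whose first step is N, whose last step is E, and which have exactly k external corners, equals C(m−1, k) · C(n−1, k), where C denotes the ordinary binomial coefficient. -/
/-!
A lattice path from `(0,0)` to `(m,n)` is encoded by the set `S ⊆ {0, …, m+n-1}` of
(0-indexed) positions of its `E`-steps, with `S.card = m`; positions not in `S` carry
`N`-steps.  An external corner of the path is an index `i` with `0 ≤ i ≤ m+n-2` such
that step `i` is `E` and step `i+1` is `N` (this is the set of 1-indexed indices from
the informal statement, shifted down by one).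
-/

/-- The set of external corners of the lattice path encoded by `S` in the `m × n`
rectangle. -/
def corners (m n : ℕ) (S : Finset ℕ) : Finset ℕ :=
  (Finset.range (m + n - 1)).filter fun i => i ∈ S ∧ (i + 1) ∉ S

open Finset

/-- Shift a path one step later. -/
def sh (S : Finset ℕ) : Finset ℕ := S.image (· + 1)

/-- Shift a path one step earlier. -/
def ish (S : Finset ℕ) : Finset ℕ := S.image (· - 1)

lemma mem_sh {S : Finset ℕ} {j : ℕ} : j ∈ sh S ↔ ∃ i ∈ S, i + 1 = j := by
  simp [sh]

lemma succ_mem_sh {S : Finset ℕ} {j : ℕ} : j + 1 ∈ sh S ↔ j ∈ S := by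
  simp only [mem_sh]
  constructor
  · rintro ⟨i, hi, h⟩; obtain rfl : i = j := by omega
    exact hi
  · intro h; exact ⟨j, h, rfl⟩

lemma zero_not_mem_sh (S : Finset ℕ) : 0 ∉ sh S := by
  simp [mem_sh]

lemma card_sh (S : Finset ℕ) : (sh S).card = S.card :=
  Finset.card_image_of_injective _ fun a b => by omega

lemma ish_sh (S : Finset ℕ) : ish (sh S) = S := by
  simp only [ish, sh, Finset.image_image]
  have : ((fun i => i - 1) ∘ fun i => i + 1) = id := by funext i; simp
  rw [this, Finset.image_id]

lemma sh_ish {S : Finset ℕ} (h : 0 ∉ S) : sh (ish S) = S := by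
  simp only [ish, sh, Finset.image_image]
  have : S.image ((fun i => i + 1) ∘ fun i => i - 1) = S.image id := by
    apply Finset.image_congr
    intro i hi
    have : i ≠ 0 := fun hi0 => h (hi0 ▸ hi)
    simp; omega
  rw [this, Finset.image_id]

lemma mem_corners {m n : ℕ} {S : Finset ℕ} {i : ℕ} :
    i ∈ corners m n S ↔ i < m + n - 1 ∧ i ∈ S ∧ i + 1 ∉ S := by
  simp [corners]

lemma corners_sh {m n m' n' : ℕ} (h : m + n = m' + n' + 1) (S : Finset ℕ) :
    corners m n (sh S) = sh (corners m' n' S) := by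
  ext i
  rcases i with _ | j
  · simp [mem_corners, zero_not_mem_sh, (zero_not_mem_sh (corners m' n' S))]
  · rw [mem_corners, succ_mem_sh, succ_mem_sh, succ_mem_sh, mem_corners]
    constructor
    · rintro ⟨h1, h2, h3⟩; exact ⟨by omega, h2, h3⟩
    · rintro ⟨h1, h2, h3⟩; exact ⟨by omega, h2, h3⟩

lemma corners_insert_sh_mem {m n m' n' : ℕ} (h : m + n = m' + n' + 1) (S : Finset ℕ)
    (h0 : 0 ∈ S) : corners m n (insert 0 (sh S)) = sh (corners m' n' S) := by
  ext i
  rcases i with _ | j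
  · simp only [mem_corners, zero_not_mem_sh (corners m' n' S), iff_false, mem_insert]
    rintro ⟨-, -, h1⟩
    exact h1 (Or.inr (succ_mem_sh.2 h0))
  · have e1 : j + 1 ∈ insert 0 (sh S) ↔ j ∈ S := by
      simp [succ_mem_sh]
    have e2 : j + 1 + 1 ∈ insert 0 (sh S) ↔ j + 1 ∈ S := by
      simp [succ_mem_sh]
    rw [mem_corners, e1, e2, succ_mem_sh, mem_corners]
    constructor
    · rintro ⟨h1, h2, h3⟩; exact ⟨by omega, h2, h3⟩
    · rintro ⟨h1, h2, h3⟩; exact ⟨by omega, h2, h3⟩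

lemma corners_insert_sh_not {m n m' n' : ℕ} (h : m + n = m' + n' + 1) (hN : 2 ≤ m + n)
    (S : Finset ℕ) (h0 : 0 ∉ S) :
    corners m n (insert 0 (sh S)) = insert 0 (sh (corners m' n' S)) := by
  ext i
  rcases i with _ | j
  · rw [mem_corners]
    have lhs : (0 : ℕ) < m + n - 1 ∧ 0 ∈ insert 0 (sh S) ∧ 0 + 1 ∉ insert 0 (sh S) := by
      refine ⟨by omega, mem_insert_self _ _, ?_⟩
      intro h1
      rcases mem_insert.1 h1 with h1 | h1
      · exact absurd h1 (by omega)
      · exact h0 (succ_mem_sh.1 h1)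
    simp only [lhs.1, lhs.2.1, lhs.2.2, mem_insert, true_and, not_false_iff, and_true]
    simp
  · have e1 : j + 1 ∈ insert 0 (sh S) ↔ j ∈ S := by simp [succ_mem_sh]
    have e2 : j + 1 + 1 ∈ insert 0 (sh S) ↔ j + 1 ∈ S := by simp [succ_mem_sh]
    have e3 : j + 1 ∈ insert 0 (sh (corners m' n' S)) ↔ j ∈ corners m' n' S := by
      simp [succ_mem_sh]
    rw [mem_corners, e1, e2, e3, mem_corners]
    constructor
    · rintro ⟨h1, h2, h3⟩; exact ⟨by omega, h2, h3⟩
    · rintro ⟨h1, h2, h3⟩; exact ⟨by omega, h2, h3⟩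

/-- Paths with first step `N` and last step `E`. -/
def pathsA (m n k : ℕ) : Finset (Finset ℕ) :=
  (Finset.range (m + n)).powerset.filter fun S =>
    S.card = m ∧ 0 ∉ S ∧ m + n - 1 ∈ S ∧ (corners m n S).card = k

/-- Paths with first step `E` and last step `E`. -/
def pathsB (m n k : ℕ) : Finset (Finset ℕ) :=
  (Finset.range (m + n)).powerset.filter fun S =>
    S.card = m ∧ 0 ∈ S ∧ m + n - 1 ∈ S ∧ (corners m n S).card = k

/-- Paths with last step `E` (any first step). -/
def pathsC (m n k : ℕ) : Finset (Finset ℕ) :=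
  (Finset.range (m + n)).powerset.filter fun S =>
    S.card = m ∧ m + n - 1 ∈ S ∧ (corners m n S).card = k

lemma mem_pathsA {m n k : ℕ} {S : Finset ℕ} :
    S ∈ pathsA m n k ↔ S ⊆ range (m + n) ∧ S.card = m ∧ 0 ∉ S ∧ m + n - 1 ∈ S ∧
      (corners m n S).card = k := by
  simp [pathsA, and_assoc]

lemma mem_pathsB {m n k : ℕ} {S : Finset ℕ} :
    S ∈ pathsB m n k ↔ S ⊆ range (m + n) ∧ S.card = m ∧ 0 ∈ S ∧ m + n - 1 ∈ S ∧
      (corners m n S).card = k := by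
  simp [pathsB, and_assoc]

lemma mem_pathsC {m n k : ℕ} {S : Finset ℕ} :
    S ∈ pathsC m n k ↔ S ⊆ range (m + n) ∧ S.card = m ∧ m + n - 1 ∈ S ∧
      (corners m n S).card = k := by
  simp [pathsC, and_assoc]

lemma pathsC_card (m n k : ℕ) :
    (pathsC m n k).card = (pathsA m n k).card + (pathsB m n k).card := by
  classical
  have h1 : (pathsC m n k).filter (fun S => 0 ∈ S) = pathsB m n k := by
    ext S; simp only [mem_filter, mem_pathsB, mem_pathsC]; tauto
  have h2 : (pathsC m n k).filter (fun S => ¬ 0 ∈ S) = pathsA m n k := by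
    ext S; simp only [mem_filter, mem_pathsA, mem_pathsC]; tauto
  rw [← Finset.card_filter_add_card_filter_not (s := pathsC m n k)
    (p := fun S => 0 ∈ S), h1, h2, Nat.add_comm]

lemma R1 (m n k : ℕ) (hm : 1 ≤ m) (hn : 2 ≤ n) :
    (pathsA m n k).card = (pathsC m (n - 1) k).card := by
  have hmn : m + (n - 1) + 1 = m + n := by omega
  apply Finset.card_nbij' (i := ish) (j := sh)
  · intro S hS
    rw [Finset.mem_coe, mem_pathsA] at hS
    obtain ⟨hsub, hcard, h0, hlast, hcor⟩ := hS
    have hge1 : ∀ i ∈ S, 1 ≤ i := by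
      intro i hi; rcases Nat.eq_zero_or_pos i with rfl | h; exact absurd hi h0; exact h
    have hSsh : sh (ish S) = S := sh_ish h0
    rw [Finset.mem_coe, mem_pathsC]
    refine ⟨?_, ?_, ?_, ?_⟩
    · intro j hj
      simp only [ish, Finset.mem_image] at hj
      obtain ⟨i, hi, rfl⟩ := hj
      have := hsub hi
      rw [Finset.mem_range] at this ⊢
      have := hge1 i hi
      omega
    · rw [← hcard]
      apply Finset.card_image_of_injOn
      intro a ha b hb hab
      have hab' : a - 1 = b - 1 := hab
      have := hge1 a ha; have := hge1 b hb; omega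
    · have : m + (n - 1) - 1 = (m + n - 1) - 1 := by omega
      rw [this]
      exact Finset.mem_image_of_mem _ hlast
    · have := corners_sh (m := m) (n := n) (m' := m) (n' := n - 1) (by omega) (ish S)
      rw [hSsh] at this
      rw [← hcor, this, card_sh]
  · intro S hS
    rw [Finset.mem_coe, mem_pathsC] at hS
    obtain ⟨hsub, hcard, hlast, hcor⟩ := hS
    rw [Finset.mem_coe, mem_pathsA]
    refine ⟨?_, ?_, ?_, ?_, ?_⟩
    · intro j hj
      rw [mem_sh] at hj
      obtain ⟨i, hi, rfl⟩ := hj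
      have := hsub hi
      rw [Finset.mem_range] at this ⊢
      omega
    · rw [card_sh, hcard]
    · exact zero_not_mem_sh S
    · have : m + n - 1 = (m + (n - 1) - 1) + 1 := by omega
      rw [this, succ_mem_sh]
      exact hlast
    · rw [corners_sh (m' := m) (n' := n - 1) (by omega), card_sh, hcor]
  · intro S hS
    rw [Finset.mem_coe, mem_pathsA] at hS
    exact sh_ish hS.2.2.1
  · intro S _
    exact ish_sh S

lemma R2a (m n k : ℕ) (hm : 2 ≤ m) (hn : 1 ≤ n) :
    ((pathsB m n k).filter fun S => 1 ∈ S).card = (pathsB (m - 1) n k).card := by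
  classical
  apply Finset.card_nbij' (i := fun S => ish (S.erase 0)) (j := fun S => insert 0 (sh S))
  · intro S hS
    rw [Finset.mem_coe, Finset.mem_filter, mem_pathsB] at hS
    obtain ⟨⟨hsub, hcard, h0, hlast, hcor⟩, h1⟩ := hS
    have hge1 : ∀ i ∈ S.erase 0, 1 ≤ i := by
      intro i hi
      have := Finset.ne_of_mem_erase hi
      omega
    have h0e : 0 ∉ S.erase 0 := Finset.notMem_erase 0 S
    have hrec : insert 0 (sh (ish (S.erase 0))) = S := by
      rw [sh_ish h0e, Finset.insert_erase h0]
    rw [Finset.mem_coe, mem_pathsB]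
    refine ⟨?_, ?_, ?_, ?_, ?_⟩
    · intro j hj
      simp only [ish, Finset.mem_image] at hj
      obtain ⟨i, hi, rfl⟩ := hj
      have := hsub (Finset.mem_of_mem_erase hi)
      rw [Finset.mem_range] at this ⊢
      have := hge1 i hi
      omega
    · have : (S.erase 0).card = m - 1 := by rw [Finset.card_erase_of_mem h0, hcard]
      rw [← this]
      apply Finset.card_image_of_injOn
      intro a ha b hb hab
      have hab' : a - 1 = b - 1 := hab
      have := hge1 a ha; have := hge1 b hb; omega
    · simp only [ish, Finset.mem_image]
      exact ⟨1, Finset.mem_erase.2 ⟨one_ne_zero, h1⟩, rfl⟩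
    · simp only [ish, Finset.mem_image]
      refine ⟨m + n - 1, Finset.mem_erase.2 ⟨by omega, hlast⟩, by omega⟩
    · have h0' : 0 ∈ ish (S.erase 0) := by
        simp only [ish, Finset.mem_image]
        exact ⟨1, Finset.mem_erase.2 ⟨one_ne_zero, h1⟩, rfl⟩
      have := corners_insert_sh_mem (m := m) (n := n) (m' := m - 1) (n' := n)
        (by omega) (ish (S.erase 0)) h0'
      rw [hrec] at this
      rw [← hcor, this, card_sh]
  · intro S hS
    rw [Finset.mem_coe, mem_pathsB] at hS
    obtain ⟨hsub, hcard, h0, hlast, hcor⟩ := hS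
    rw [Finset.mem_coe, Finset.mem_filter, mem_pathsB]
    refine ⟨⟨?_, ?_, ?_, ?_, ?_⟩, ?_⟩
    · intro j hj
      rcases Finset.mem_insert.1 hj with rfl | hj
      · rw [Finset.mem_range]; omega
      · rw [mem_sh] at hj
        obtain ⟨i, hi, rfl⟩ := hj
        have := hsub hi
        rw [Finset.mem_range] at this ⊢
        omega
    · rw [Finset.card_insert_of_notMem (zero_not_mem_sh S), card_sh, hcard]
      omega
    · exact Finset.mem_insert_self 0 _
    · apply Finset.mem_insert_of_mem
      have : m + n - 1 = (m - 1 + n - 1) + 1 := by omega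
      rw [this, succ_mem_sh]
      exact hlast
    · rw [corners_insert_sh_mem (m' := m - 1) (n' := n) (by omega) S h0, card_sh, hcor]
    · exact Finset.mem_insert_of_mem (succ_mem_sh.2 h0)
  · intro S hS
    rw [Finset.mem_coe, Finset.mem_filter, mem_pathsB] at hS
    beta_reduce
    rw [sh_ish (Finset.notMem_erase 0 S), Finset.insert_erase hS.1.2.2.1]
  · intro S hS
    rw [Finset.mem_coe, mem_pathsB] at hS
    beta_reduce
    rw [Finset.erase_insert (zero_not_mem_sh S), ish_sh]

lemma R2b (m n k : ℕ) (hm : 2 ≤ m) (hn : 1 ≤ n) :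
    ((pathsB m n (k + 1)).filter fun S => 1 ∉ S).card = (pathsA (m - 1) n k).card := by
  classical
  apply Finset.card_nbij' (i := fun S => ish (S.erase 0)) (j := fun S => insert 0 (sh S))
  · intro S hS
    rw [Finset.mem_coe, Finset.mem_filter, mem_pathsB] at hS
    obtain ⟨⟨hsub, hcard, h0, hlast, hcor⟩, h1⟩ := hS
    have hge1 : ∀ i ∈ S.erase 0, 1 ≤ i := by
      intro i hi
      have := Finset.ne_of_mem_erase hi
      omega
    have h0e : 0 ∉ S.erase 0 := Finset.notMem_erase 0 S
    have hrec : insert 0 (sh (ish (S.erase 0))) = S := by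
      rw [sh_ish h0e, Finset.insert_erase h0]
    have h0' : 0 ∉ ish (S.erase 0) := by
      simp only [ish, Finset.mem_image]
      rintro ⟨i, hi, hi0⟩
      have := hge1 i hi
      have : i = 1 := by omega
      subst this
      exact h1 (Finset.mem_of_mem_erase hi)
    rw [Finset.mem_coe, mem_pathsA]
    refine ⟨?_, ?_, ?_, ?_, ?_⟩
    · intro j hj
      simp only [ish, Finset.mem_image] at hj
      obtain ⟨i, hi, rfl⟩ := hj
      have := hsub (Finset.mem_of_mem_erase hi)
      rw [Finset.mem_range] at this ⊢
      have := hge1 i hi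
      omega
    · have : (S.erase 0).card = m - 1 := by rw [Finset.card_erase_of_mem h0, hcard]
      rw [← this]
      apply Finset.card_image_of_injOn
      intro a ha b hb hab
      have hab' : a - 1 = b - 1 := hab
      have := hge1 a ha; have := hge1 b hb; omega
    · exact h0'
    · simp only [ish, Finset.mem_image]
      refine ⟨m + n - 1, Finset.mem_erase.2 ⟨by omega, hlast⟩, by omega⟩
    · have := corners_insert_sh_not (m := m) (n := n) (m' := m - 1) (n' := n)
        (by omega) (by omega) (ish (S.erase 0)) h0'
      rw [hrec] at this
      have hcard2 : (corners m n S).card =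
          (corners (m - 1) n (ish (S.erase 0))).card + 1 := by
        rw [this, Finset.card_insert_of_notMem (zero_not_mem_sh _), card_sh]
      beta_reduce
      omega
  · intro S hS
    rw [Finset.mem_coe, mem_pathsA] at hS
    obtain ⟨hsub, hcard, h0, hlast, hcor⟩ := hS
    rw [Finset.mem_coe, Finset.mem_filter, mem_pathsB]
    refine ⟨⟨?_, ?_, ?_, ?_, ?_⟩, ?_⟩
    · intro j hj
      rcases Finset.mem_insert.1 hj with rfl | hj
      · rw [Finset.mem_range]; omega
      · rw [mem_sh] at hj
        obtain ⟨i, hi, rfl⟩ := hj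
        have := hsub hi
        rw [Finset.mem_range] at this ⊢
        omega
    · rw [Finset.card_insert_of_notMem (zero_not_mem_sh S), card_sh, hcard]
      omega
    · exact Finset.mem_insert_self 0 _
    · apply Finset.mem_insert_of_mem
      have : m + n - 1 = (m - 1 + n - 1) + 1 := by omega
      rw [this, succ_mem_sh]
      exact hlast
    · rw [corners_insert_sh_not (m' := m - 1) (n' := n) (by omega) (by omega) S h0,
        Finset.card_insert_of_notMem (zero_not_mem_sh _), card_sh, hcor]
    · intro h1
      rcases Finset.mem_insert.1 h1 with h | h
      · exact absurd h one_ne_zero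
      · exact h0 (succ_mem_sh.1 h)
  · intro S hS
    rw [Finset.mem_coe, Finset.mem_filter, mem_pathsB] at hS
    beta_reduce
    rw [sh_ish (Finset.notMem_erase 0 S), Finset.insert_erase hS.1.2.2.1]
  · intro S hS
    rw [Finset.mem_coe, mem_pathsA] at hS
    beta_reduce
    rw [Finset.erase_insert (zero_not_mem_sh S), ish_sh]

lemma R2c (m n : ℕ) (hm : 1 ≤ m) (hn : 1 ≤ n) :
    ((pathsB m n 0).filter fun S => 1 ∉ S) = ∅ := by
  classical
  rw [Finset.eq_empty_iff_forall_notMem]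
  intro S hS
  rw [Finset.mem_filter, mem_pathsB] at hS
  obtain ⟨⟨hsub, hcard, h0, hlast, hcor⟩, h1⟩ := hS
  have : 0 ∈ corners m n S := mem_corners.2 ⟨by omega, h0, h1⟩
  rw [Finset.card_eq_zero] at hcor
  rw [hcor] at this
  exact absurd this (Finset.notMem_empty 0)

lemma baseA (m k : ℕ) (hm : 1 ≤ m) :
    (pathsA m 1 k).card = if k = 0 then 1 else 0 := by
  classical
  set X : Finset ℕ := (Finset.range (m + 1)).erase 0 with hX
  have hXcard : X.card = m := by
    rw [hX, Finset.card_erase_of_mem (Finset.mem_range.2 (by omega)), Finset.card_range]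
    omega
  have hmem : ∀ S, S ∈ pathsA m 1 k → S = X := by
    intro S hS
    rw [mem_pathsA] at hS
    obtain ⟨hsub, hcard, h0, -, -⟩ := hS
    apply Finset.eq_of_subset_of_card_le
    · intro i hi
      rw [hX, Finset.mem_erase]
      have : m + 1 = m + 1 := rfl
      refine ⟨fun h => h0 (h ▸ hi), ?_⟩
      have := hsub hi
      rwa [Finset.mem_range] at this ⊢
    · rw [hXcard, hcard]
  have hcorX : corners m 1 X = ∅ := by
    rw [Finset.eq_empty_iff_forall_notMem]
    intro i hi
    rw [mem_corners] at hi
    obtain ⟨h1, h2, h3⟩ := hi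
    apply h3
    rw [hX, Finset.mem_erase]
    exact ⟨by omega, Finset.mem_range.2 (by omega)⟩
  have hXA : X ∈ pathsA m 1 0 := by
    rw [mem_pathsA]
    refine ⟨Finset.erase_subset _ _, hXcard, Finset.notMem_erase 0 _, ?_, by
      rw [hcorX]; rfl⟩
    rw [hX, Finset.mem_erase]
    exact ⟨by omega, Finset.mem_range.2 (by omega)⟩
  rcases Nat.eq_zero_or_pos k with rfl | hk
  · rw [if_pos rfl]
    have : pathsA m 1 0 = {X} := by
      apply Finset.eq_singleton_iff_unique_mem.2
      exact ⟨hXA, hmem⟩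
    rw [this, Finset.card_singleton]
  · rw [if_neg (by omega)]
    rw [Finset.card_eq_zero, Finset.eq_empty_iff_forall_notMem]
    intro S hS
    have hSX := hmem S hS
    rw [mem_pathsA] at hS
    obtain ⟨-, -, -, -, hcor⟩ := hS
    rw [hSX, hcorX] at hcor
    simp at hcor
    omega

lemma baseB (n k : ℕ) (hn : 1 ≤ n) : pathsB 1 n k = ∅ := by
  rw [Finset.eq_empty_iff_forall_notMem]
  intro S hS
  rw [mem_pathsB] at hS
  obtain ⟨hsub, hcard, h0, hlast, -⟩ := hS
  have hS0 : {0} = S := by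
    apply Finset.eq_of_subset_of_card_le
    · intro i hi
      rw [Finset.mem_singleton] at hi
      rw [hi]; exact h0
    · rw [hcard]; rfl
  rw [← hS0, Finset.mem_singleton] at hlast
  omega

lemma mainAB : ∀ N m n k : ℕ, m + n = N → 1 ≤ m → 1 ≤ n →
    (pathsA m n k).card = (m - 1).choose k * (n - 1).choose k ∧
    (pathsB m n k).card = (if k = 0 then 0 else (m - 1).choose k * (n - 1).choose (k - 1)) := by
  intro N
  induction N using Nat.strong_induction_on with
  | _ N ih =>
    intro m n k hN hm hn
    constructor
    · -- A part
      rcases Nat.lt_or_ge n 2 with hn2 | hn2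
      · obtain rfl : n = 1 := by omega
        rw [baseA m k hm]
        rcases Nat.eq_zero_or_pos k with rfl | hk
        · simp
        · rw [if_neg (by omega)]
          have : Nat.choose 0 k = 0 := by
            rw [Nat.choose_eq_zero_of_lt hk]
          simp only [Nat.sub_self] at *
          rw [this, Nat.mul_zero]
      · rw [R1 m n k hm hn2, pathsC_card]
        obtain ⟨hA, hB⟩ := ih (N - 1) (by omega) m (n - 1) k (by omega) hm (by omega)
        rw [hA, hB]
        rcases Nat.eq_zero_or_pos k with rfl | hk
        · simp
        · rw [if_neg (by omega)]
          obtain ⟨p, rfl⟩ : ∃ p, n = p + 2 := ⟨n - 2, by omega⟩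
          obtain ⟨l, rfl⟩ : ∃ l, k = l + 1 := ⟨k - 1, by omega⟩
          have e1 : p + 2 - 1 - 1 = p := by omega
          have e2 : p + 2 - 1 = p + 1 := by omega
          rw [e1, e2]
          have e3 : l + 1 - 1 = l := by omega
          rw [e3, ← Nat.mul_add]
          congr 1
          rw [Nat.choose_succ_succ' (p) (l)]
          omega
    · -- B part
      rcases Nat.lt_or_ge m 2 with hm2 | hm2
      · obtain rfl : m = 1 := by omega
        rw [baseB n k hn, Finset.card_empty]
        rcases Nat.eq_zero_or_pos k with rfl | hk
        · simp
        · rw [if_neg (by omega)]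
          have : Nat.choose 0 k = 0 := Nat.choose_eq_zero_of_lt hk
          simp only [Nat.sub_self]
          rw [this, Nat.zero_mul]
      · have hsplit : (pathsB m n k).card =
            ((pathsB m n k).filter fun S => 1 ∈ S).card +
            ((pathsB m n k).filter fun S => ¬ 1 ∈ S).card := by
          classical
          rw [Finset.card_filter_add_card_filter_not]
        obtain ⟨hA, hB⟩ := ih (N - 1) (by omega) (m - 1) n k (by omega) (by omega) hn
        rcases Nat.eq_zero_or_pos k with rfl | hk
        · rw [hsplit, R2a m n 0 hm2 hn, R2c m n (by omega) hn, Finset.card_empty, hB]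
          simp
        · obtain ⟨l, rfl⟩ : ∃ l, k = l + 1 := ⟨k - 1, by omega⟩
          obtain ⟨hA', _⟩ := ih (N - 1) (by omega) (m - 1) n l (by omega) (by omega) hn
          rw [hsplit, R2a m n (l + 1) hm2 hn, R2b m n l hm2 hn, hB, hA']
          rw [if_neg (by omega), if_neg (by omega)]
          obtain ⟨q, rfl⟩ : ∃ q, m = q + 2 := ⟨m - 2, by omega⟩
          have e1 : q + 2 - 1 - 1 = q := by omega
          have e2 : q + 2 - 1 = q + 1 := by omega
          have e3 : l + 1 - 1 = l := by omega
          rw [e1, e2, e3, ← Nat.add_mul]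
          congr 1
          rw [Nat.choose_succ_succ' q l]
          omega

/-- The number of lattice paths from `(0,0)` to `(m,n)` whose first step is `N`, whose
last step is `E`, and which have exactly `k` external corners is
`C(m-1,k) · C(n-1,k)`. -/
theorem card_paths_first_N_last_E (m n k : ℕ) (hm : 1 ≤ m) (hn : 1 ≤ n) :
    (((Finset.range (m + n)).powerset.filter fun S =>
        S.card = m ∧ 0 ∉ S ∧ m + n - 1 ∈ S ∧ (corners m n S).card = k).card) =
      (m - 1).choose k * (n - 1).choose k := by
  exact (mainAB (m + n) m n k rfl hm hn).1
end

section
/- Let m, n ≥ 1 be coprime integers and k ≥ 0. The number of Dyck paths in the m×n rectangle having exactly k external corners equals N_k = (1/(k+1)) · C(m−1, k) · C(n−1, k), where C denotes the ordinary binomial coefficient. -/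
/-- The path encoded by `S` is a Dyck path in the `m × n` rectangle: it stays weakly
above the diagonal, i.e. every prefix (of length `j`) with `a` E-steps and `b = j - a`
N-steps satisfies `b·m ≥ a·n`. -/
def IsDyck (m n : ℕ) (S : Finset ℕ) : Prop :=
  ∀ j ∈ Finset.range (m + n + 1),
    (S ∩ Finset.range j).card * n ≤ (j - (S ∩ Finset.range j).card) * m

instance (m n : ℕ) : DecidablePred (IsDyck m n) := fun _ => by
  unfold IsDyck; infer_instance

open Finset
namespace RatDyck
/-- partial sums of a sequence -/
def psum (c : ℕ → ℕ) (t : ℕ) : ℕ := ∑ i ∈ Finset.range t, c i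

@[simp] lemma psum_zero (c : ℕ → ℕ) : psum c 0 = 0 := rfl

lemma psum_succ (c : ℕ → ℕ) (t : ℕ) : psum c (t+1) = psum c t + c t :=
  Finset.sum_range_succ c t

lemma psum_mono (c : ℕ → ℕ) : Monotone (psum c) := fun s t hst =>
  Finset.sum_le_sum_of_subset (Finset.range_subset_range.2 hst)

lemma psum_congr {c c' : ℕ → ℕ} {t : ℕ} (h : ∀ i < t, c i = c' i) :
    psum c t = psum c' t :=
  Finset.sum_congr rfl fun i hi => h i (Finset.mem_range.1 hi)

lemma psum_add_period {c : ℕ → ℕ} {p : ℕ} (hc : ∀ i, c (i + p) = c i) (t : ℕ) :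
    psum c (t + p) = psum c t + psum c p := by
  induction t with
  | zero => simp
  | succ t ih =>
      have : t + 1 + p = (t + p) + 1 := by omega
      rw [this, psum_succ, ih, hc t, psum_succ]
      omega

lemma psum_lt_psum {c : ℕ → ℕ} (hc : ∀ i, 0 < c i) {s t : ℕ} (h : s < t) :
    psum c s < psum c t := by
  have h1 : psum c (s+1) ≤ psum c t := psum_mono c h
  have := psum_succ c s
  have := hc s
  omega

lemma le_psum_sub {c : ℕ → ℕ} (hc : ∀ i, 0 < c i) {s t : ℕ} (h : s ≤ t) :
    s - t ≤ 0 ∧ psum c t - psum c s ≥ t - s := by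
  constructor
  · omega
  · induction t with
    | zero => omega
    | succ t ih =>
        rcases Nat.lt_or_ge s (t+1) with h'|h'
        · have := psum_succ c t
          have := hc t
          rcases Nat.lt_or_ge s t with h''|h''
          · have := ih (by omega)
            omega
          · have : s = t := by omega
            subst this
            omega
        · omega

/-- the psum difference over `u` steps with positive parts is at least `u` -/
lemma psum_diff_ge {c : ℕ → ℕ} (hc : ∀ i, 0 < c i) {s t : ℕ} (h : s ≤ t) :
    t - s ≤ psum c t - psum c s := (le_psum_sub hc h).2

/-- periodic extension of a tuple -/
def per (k : ℕ) (x : Fin (k+1) → ℕ) : ℕ → ℕ :=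
  fun i => x ⟨i % (k+1), Nat.mod_lt _ (Nat.succ_pos k)⟩

lemma per_apply {k : ℕ} (x : Fin (k+1) → ℕ) {i : ℕ} (h : i < k+1) :
    per k x i = x ⟨i, h⟩ := by
  simp [per, Nat.mod_eq_of_lt h]

lemma per_periodic {k : ℕ} (x : Fin (k+1) → ℕ) (i : ℕ) :
    per k x (i + (k+1)) = per k x i := by
  simp [per, Nat.add_mod_right]

lemma per_pos {k : ℕ} {x : Fin (k+1) → ℕ} (hx : ∀ i, 0 < x i) (i : ℕ) :
    0 < per k x i := hx _

lemma psum_per_eq_sum {k : ℕ} (x : Fin (k+1) → ℕ) :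
    psum (per k x) (k+1) = ∑ i, x i := by
  rw [psum, Finset.sum_range fun i => per k x i]
  exact Finset.sum_congr rfl fun i _ => per_apply x i.2


/-- the `t`-th block of `E`-steps -/
def blocks (c d : ℕ → ℕ) (t : ℕ) : Finset ℕ :=
  Finset.Ico (psum c (t+1) + psum d t) (psum c (t+1) + psum d (t+1))

def build (k : ℕ) (c d : ℕ → ℕ) : Finset ℕ := (Finset.range (k+1)).biUnion (blocks c d)

lemma mem_build {k : ℕ} {c d : ℕ → ℕ} {i : ℕ} :
    i ∈ build k c d ↔ ∃ t < k + 1,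
      psum c (t+1) + psum d t ≤ i ∧ i < psum c (t+1) + psum d (t+1) := by
  simp [build, blocks]

lemma blocks_disjoint {c d : ℕ → ℕ} {s t : ℕ} (h : s < t) :
    Disjoint (blocks c d s) (blocks c d t) := by
  rw [Finset.disjoint_left]
  intro i hi1 hi2
  simp only [blocks, Finset.mem_Ico] at hi1 hi2
  have h1 : psum c (s+1) ≤ psum c (t+1) := psum_mono c (by omega)
  have h2 : psum d (s+1) ≤ psum d t := psum_mono d h
  omega

lemma exists_window_lt (g : ℕ → ℕ) (h0 : g 0 = 0) {k j : ℕ} (hj : j < g (k+1)) :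
    ∃ t, t ≤ k ∧ g t ≤ j ∧ j < g (t+1) := by
  classical
  set t := Nat.findGreatest (fun t => g t ≤ j) k with ht
  have h1 : g t ≤ j := Nat.findGreatest_spec (P := fun t => g t ≤ j) (Nat.zero_le k) (by simp [h0])
  refine ⟨t, Nat.findGreatest_le k, h1, ?_⟩
  rcases Nat.lt_or_ge t k with h | h
  · by_contra hlt
    push_neg at hlt
    exact Nat.findGreatest_is_greatest (P := fun t => g t ≤ j) (n := k) (Nat.lt_succ_self t) (by omega) hlt
  · have : t = k := le_antisymm (Nat.findGreatest_le k) h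
    rw [this]; exact hj

lemma exists_window_le (g : ℕ → ℕ) (h0 : g 0 = 0) {k j : ℕ} (hj : j ≤ g (k+1)) :
    ∃ t, t ≤ k ∧ g t ≤ j ∧ j ≤ g (t+1) := by
  classical
  set t := Nat.findGreatest (fun t => g t ≤ j) k with ht
  have h1 : g t ≤ j := Nat.findGreatest_spec (P := fun t => g t ≤ j) (Nat.zero_le k) (by simp [h0])
  refine ⟨t, Nat.findGreatest_le k, h1, ?_⟩
  rcases Nat.lt_or_ge t k with h | h
  · by_contra hlt
    push_neg at hlt
    exact Nat.findGreatest_is_greatest (P := fun t => g t ≤ j) (n := k) (Nat.lt_succ_self t) (by omega) (le_of_lt hlt)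
  · have : t = k := le_antisymm (Nat.findGreatest_le k) h
    rw [this]; exact hj

lemma card_blocks_inter {c d : ℕ → ℕ} (j s : ℕ) :
    (blocks c d s ∩ Finset.range j).card
      = min (psum c (s+1) + psum d (s+1)) j - min (psum c (s+1) + psum d s) j := by
  set A := psum c (s+1) + psum d s with hA
  set B := psum c (s+1) + psum d (s+1) with hB
  have hAB : A ≤ B := by
    have : psum d s ≤ psum d (s+1) := psum_mono d (by omega)
    omega
  rw [blocks, Finset.range_eq_Ico, Finset.Ico_inter_Ico, Nat.card_Ico]
  rcases le_total A j with h | h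
  · rw [min_eq_left h]
    simp [hA, hB]
  · rw [min_eq_right h, min_eq_right (le_trans h hAB)]
    have : max A 0 = A := Nat.max_eq_left (Nat.zero_le A)
    simp [this]
    omega

lemma card_build_inter {k : ℕ} {c d : ℕ → ℕ} {j t : ℕ} (ht : t ≤ k)
    (h1 : psum c t + psum d t ≤ j) (h2 : j ≤ psum c (t+1) + psum d (t+1)) :
    ((build k c d) ∩ Finset.range j).card
      = psum d t + (j - min (psum c (t+1) + psum d t) j) := by
  have hre : build k c d ∩ Finset.range j
      = (Finset.range (k+1)).biUnion (fun s => blocks c d s ∩ Finset.range j) := by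
    rw [build, Finset.biUnion_inter]
  rw [hre, Finset.card_biUnion]
  · -- evaluate the sum
    have hsplit : t + 1 ≤ k + 1 := by omega
    rw [← Finset.sum_range_add_sum_Ico _ hsplit, Finset.sum_range_succ]
    have hlow : ∀ s ∈ Finset.range t, (blocks c d s ∩ Finset.range j).card = d s := by
      intro s hs
      rw [Finset.mem_range] at hs
      rw [card_blocks_inter]
      have e1 : psum c (s+1) + psum d (s+1) ≤ j := by
        have : psum c (s+1) ≤ psum c t := psum_mono c (by omega)
        have : psum d (s+1) ≤ psum d t := psum_mono d (by omega)
        omega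
      have e2 : psum c (s+1) + psum d s ≤ j := by
        have : psum d s ≤ psum d (s+1) := psum_mono d (by omega)
        omega
      rw [min_eq_left e1, min_eq_left e2, psum_succ d s]
      omega
    have hhigh : ∀ s ∈ Finset.Ico (t+1) (k+1), (blocks c d s ∩ Finset.range j).card = 0 := by
      intro s hs
      rw [Finset.mem_Ico] at hs
      rw [card_blocks_inter]
      have e1 : j ≤ psum c (s+1) + psum d s := by
        have : psum c (t+1) ≤ psum c (s+1) := psum_mono c (by omega)
        have : psum d (t+1) ≤ psum d s := psum_mono d (by omega)
        omega
      rw [min_eq_right e1, min_eq_right (by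
        have : psum d s ≤ psum d (s+1) := psum_mono d (by omega)
        omega)]
      omega
    rw [Finset.sum_congr rfl hlow, Finset.sum_congr rfl hhigh]
    rw [card_blocks_inter, min_eq_right h2]
    simp [psum]
  · -- pairwise disjointness
    intro x _ y _ hxy
    have : ∀ a b : ℕ, a < b →
        Disjoint (blocks c d a ∩ Finset.range j) (blocks c d b ∩ Finset.range j) := by
      intro a b hab
      exact Finset.disjoint_of_subset_left Finset.inter_subset_left
        (Finset.disjoint_of_subset_right Finset.inter_subset_left (blocks_disjoint hab))
    rcases Nat.lt_or_ge x y with h | h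
    · exact this x y h
    · exact (this y x (by omega)).symm


/-- the block-level Dyck condition -/
def DyckW (m n k : ℕ) (c d : ℕ → ℕ) : Prop :=
  ∀ t ≤ k, psum d (t+1) * n ≤ psum c (t+1) * m

section Forward

variable {m n k : ℕ} {c d : ℕ → ℕ}

lemma build_subset_range (hcs : psum c (k+1) = n) (hds : psum d (k+1) = m) :
    build k c d ⊆ Finset.range (m + n) := by
  intro i hi
  rw [mem_build] at hi
  obtain ⟨t, ht, _, h2⟩ := hi
  have e1 : psum c (t+1) ≤ n := hcs ▸ psum_mono c (by omega)
  have e2 : psum d (t+1) ≤ m := hds ▸ psum_mono d (by omega)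
  rw [Finset.mem_range]
  omega

lemma card_build (hcs : psum c (k+1) = n) (hds : psum d (k+1) = m) :
    (build k c d).card = m := by
  have hsub := build_subset_range hcs hds
  have : build k c d ∩ Finset.range (m+n) = build k c d := Finset.inter_eq_left.mpr hsub
  have hck : psum c k ≤ n := hcs ▸ psum_mono c (by omega)
  have hdk : psum d k ≤ m := hds ▸ psum_mono d (by omega)
  have h := card_build_inter (c := c) (d := d) (j := m + n) (t := k) le_rfl
    (by omega) (by rw [hcs, hds]; omega)
  rw [this] at h
  rw [h, min_eq_left (by rw [hcs]; omega)]
  rw [hcs] at *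
  omega

lemma isDyck_build (hcs : psum c (k+1) = n) (hds : psum d (k+1) = m)
    (hDW : DyckW m n k c d) : IsDyck m n (build k c d) := by
  intro j hj
  rw [Finset.mem_range] at hj
  obtain ⟨t, ht, h1, h2⟩ := exists_window_le (fun t => psum c t + psum d t) (by simp [psum])
    (k := k) (j := j) (by simp only [hcs, hds]; omega)
  rw [card_build_inter ht h1 h2]
  have hDn : psum d t * n ≤ psum c t * m := by
    cases t with
    | zero => simp [psum]
    | succ t' => exact hDW t' (by omega)
  rcases le_total j (psum c (t+1) + psum d t) with hcase | hcase
  · rw [min_eq_right hcase]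
    have hst : psum c t ≤ psum c (t+1) := psum_mono c (by omega)
    have : psum d t * n ≤ psum c t * m := hDn
    have hmul : psum c t * m ≤ (j - psum d t) * m := Nat.mul_le_mul_right _ (by omega)
    simp only [Nat.sub_self, Nat.add_zero]
    omega
  · rw [min_eq_left hcase]
    have hkey : (psum d t + (j - (psum c (t+1) + psum d t))) ≤ psum d (t+1) := by omega
    have h3 : (psum d t + (j - (psum c (t+1) + psum d t))) * n ≤ psum d (t+1) * n :=
      Nat.mul_le_mul_right _ hkey
    have h4 := hDW t ht
    have h5 : j - (psum d t + (j - (psum c (t+1) + psum d t))) = psum c (t+1) := by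
      have : psum d t ≤ psum d (t+1) := psum_mono d (by omega)
      omega
    rw [h5]
    omega

lemma boundary_not_mem_build (hc : ∀ i, 0 < c i) {t : ℕ} (ht : t ≤ k) :
    (psum c t + psum d t) ∉ build k c d := by
  rw [mem_build]
  rintro ⟨s, hs, h1, h2⟩
  rcases Nat.lt_or_ge s t with h | h
  · have e1 : psum c (s+1) ≤ psum c t := psum_mono c (by omega)
    have e2 : psum d (s+1) ≤ psum d t := psum_mono d (by omega)
    omega
  · have e1 : psum c (t+1) ≤ psum c (s+1) := psum_mono c (by omega)
    have e2 : psum d t ≤ psum d s := psum_mono d (by omega)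
    have e3 : psum c t < psum c (t+1) := by
      rw [psum_succ]; have := hc t; omega
    omega

lemma corner_mem_build (hc : ∀ i, 0 < c i) (hd : ∀ i, 0 < d i)
    (hcs : psum c (k+1) = n) (hds : psum d (k+1) = m) {t : ℕ} (ht : t < k) :
    psum c (t+1) + psum d (t+1) - 1 ∈ corners m n (build k c d) := by
  have hd1 : psum d t < psum d (t+1) := by rw [psum_succ]; have := hd t; omega
  have hB1 : 1 ≤ psum c (t+1) + psum d (t+1) := by omega
  have hBsum : psum c (t+1) + psum d (t+1) - 1 + 1 = psum c (t+1) + psum d (t+1) := by omega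
  rw [corners, Finset.mem_filter, Finset.mem_range]
  refine ⟨?_, ?_, ?_⟩
  · -- bound
    have e1 : psum c (t+1) ≤ psum c k := psum_mono c (by omega)
    have e2 : psum d (t+1) ≤ psum d k := psum_mono d (by omega)
    have e3 : psum c k < psum c (k+1) := by rw [psum_succ]; have := hc k; omega
    have e4 : psum d k < psum d (k+1) := by rw [psum_succ]; have := hd k; omega
    omega
  · rw [mem_build]
    exact ⟨t, by omega, by omega, by omega⟩
  · rw [hBsum]
    have := boundary_not_mem_build (d := d) hc (show t + 1 ≤ k by omega)
    convert this using 2 <;> rw [psum_succ]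

lemma corners_build (hc : ∀ i, 0 < c i) (hd : ∀ i, 0 < d i)
    (hcs : psum c (k+1) = n) (hds : psum d (k+1) = m) :
    corners m n (build k c d)
      = (Finset.range k).image (fun t => psum c (t+1) + psum d (t+1) - 1) := by
  ext i
  constructor
  · intro hi
    rw [corners, Finset.mem_filter, Finset.mem_range] at hi
    obtain ⟨hilt, hiS, hiN⟩ := hi
    rw [mem_build] at hiS
    obtain ⟨s, hs, h1, h2⟩ := hiS
    have his : i + 1 = psum c (s+1) + psum d (s+1) := by
      by_contra hne
      exact hiN (mem_build.2 ⟨s, hs, by omega, by omega⟩)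
    have hsk : s < k := by
      by_contra hcon
      have : s = k := by omega
      subst this
      rw [hcs, hds] at his
      omega
    rw [Finset.mem_image]
    exact ⟨s, Finset.mem_range.2 hsk, by omega⟩
  · intro hi
    rw [Finset.mem_image] at hi
    obtain ⟨t, ht, rfl⟩ := hi
    exact corner_mem_build hc hd hcs hds (Finset.mem_range.1 ht)

lemma psum_pos {e : ℕ → ℕ} (he : ∀ i, 0 < e i) (t : ℕ) : 0 < psum e (t+1) := by
  have : psum e 0 < psum e (t+1) := psum_lt_psum he (by omega)
  simpa using this

lemma bsum_strictMono (hc : ∀ i, 0 < c i) (hd : ∀ i, 0 < d i) :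
    StrictMono (fun t => psum c (t+1) + psum d (t+1) - 1) := by
  intro s t hst
  have h1 : psum c (s+1) < psum c (t+1) := psum_lt_psum hc (by omega)
  have h2 : psum d (s+1) < psum d (t+1) := psum_lt_psum hd (by omega)
  simp only
  omega

lemma card_corners_build (hc : ∀ i, 0 < c i) (hd : ∀ i, 0 < d i)
    (hcs : psum c (k+1) = n) (hds : psum d (k+1) = m) :
    (corners m n (build k c d)).card = k := by
  rw [corners_build hc hd hcs hds,
    Finset.card_image_of_injOn ((bsum_strictMono hc hd).injective.injOn),
    Finset.card_range]

lemma card_build_inter_boundary (hc : ∀ i, 0 < c i) {t : ℕ} (ht : t ≤ k) :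
    ((build k c d) ∩ Finset.range (psum c t + psum d t)).card = psum d t := by
  have h2 : psum c t + psum d t ≤ psum c (t+1) + psum d (t+1) := by
    have := psum_mono c (show t ≤ t+1 by omega)
    have := psum_mono d (show t ≤ t+1 by omega)
    omega
  rw [card_build_inter ht le_rfl h2]
  have : psum c t ≤ psum c (t+1) := psum_mono c (by omega)
  rw [min_eq_right (by omega)]
  omega

lemma build_inj {c' d' : ℕ → ℕ}
    (hc : ∀ i, 0 < c i) (hd : ∀ i, 0 < d i)
    (hcs : psum c (k+1) = n) (hds : psum d (k+1) = m)
    (hc' : ∀ i, 0 < c' i) (hd' : ∀ i, 0 < d' i)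
    (hcs' : psum c' (k+1) = n) (hds' : psum d' (k+1) = m)
    (h : build k c d = build k c' d') :
    ∀ t ≤ k, c t = c' t ∧ d t = d' t := by
  have hcard : (corners m n (build k c d)).card = k := card_corners_build hc hd hcs hds
  have hf : (fun t : Fin k => psum c (t.val+1) + psum d (t.val+1) - 1)
      = (corners m n (build k c d)).orderEmbOfFin hcard :=
    Finset.orderEmbOfFin_unique hcard
      (fun t => corner_mem_build hc hd hcs hds t.2)
      (fun a b hab => bsum_strictMono hc hd (by exact_mod_cast hab))
  have hf' : (fun t : Fin k => psum c' (t.val+1) + psum d' (t.val+1) - 1)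
      = (corners m n (build k c d)).orderEmbOfFin hcard :=
    Finset.orderEmbOfFin_unique hcard
      (fun t => h ▸ corner_mem_build hc' hd' hcs' hds' t.2)
      (fun a b hab => bsum_strictMono hc' hd' (by exact_mod_cast hab))
  -- boundaries agree
  have hbnd : ∀ t ≤ k + 1, psum c t + psum d t = psum c' t + psum d' t := by
    intro t htk
    rcases Nat.eq_zero_or_pos t with rfl | hpos
    · simp [psum]
    rcases Nat.lt_or_ge (t-1) k with hlt | hge
    · have e0 := congrFun (hf.trans hf'.symm) ⟨t-1, hlt⟩
      simp only at e0
      have ht' : t - 1 + 1 = t := by omega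
      rw [ht'] at e0
      have e1 : 0 < psum c t := by
        have : psum c 0 < psum c t := psum_lt_psum hc hpos
        simpa using this
      have e1' : 0 < psum c' t := by
        have : psum c' 0 < psum c' t := psum_lt_psum hc' hpos
        simpa using this
      omega
    · have : t = k + 1 := by omega
      subst this
      rw [hcs, hds, hcs', hds']
  -- d partial sums agree
  have hdsum : ∀ t ≤ k + 1, psum d t = psum d' t := by
    intro t htk
    rcases Nat.lt_or_ge t (k+1) with hlt | hge
    · have e1 := card_build_inter_boundary (d := d) hc (show t ≤ k by omega)
      have e2 := card_build_inter_boundary (d := d') hc' (show t ≤ k by omega)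
      rw [← h, ← hbnd t htk] at e2
      omega
    · have : t = k + 1 := by omega
      subst this
      rw [hds, hds']
  intro t htk
  have b1 := hbnd t (by omega)
  have b2 := hbnd (t+1) (by omega)
  have d1 := hdsum t (by omega)
  have d2 := hdsum (t+1) (by omega)
  simp only [psum_succ] at b2 d2
  omega


lemma build_subset_range' :
    build k c d ⊆ Finset.range (psum c (k+1) + psum d (k+1)) := by
  intro i hi
  rw [mem_build] at hi
  obtain ⟨t, ht, _, h2⟩ := hi
  have e1 : psum c (t+1) ≤ psum c (k+1) := psum_mono c (by omega)
  have e2 : psum d (t+1) ≤ psum d (k+1) := psum_mono d (by omega)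
  rw [Finset.mem_range]
  omega

lemma card_build' : (build k c d).card = psum d (k+1) := by
  have hsub : build k c d ⊆ Finset.range (psum c (k+1) + psum d (k+1)) := build_subset_range'
  have h := card_build_inter (c := c) (d := d) (t := k)
    (j := psum c (k+1) + psum d (k+1)) le_rfl
    (by
      have := psum_mono c (show k ≤ k+1 by omega)
      have := psum_mono d (show k ≤ k+1 by omega)
      omega) le_rfl
  rw [Finset.inter_eq_left.mpr hsub] at h
  rw [h, min_eq_left (by have := psum_mono d (show k ≤ k+1 by omega); omega)]
  rw [psum_succ d k]
  omega

lemma card_build_inter_boundary' (hc : ∀ i, 0 < c i) {t : ℕ} (ht : t ≤ k + 1) :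
    ((build k c d) ∩ Finset.range (psum c t + psum d t)).card = psum d t := by
  rcases Nat.lt_or_ge t (k+1) with h | h
  · exact card_build_inter_boundary hc (by omega)
  · have : t = k + 1 := by omega
    subst this
    rw [Finset.inter_eq_left.mpr build_subset_range', card_build']

lemma build_congr {c' d' : ℕ → ℕ} (hcc : ∀ i ≤ k, c i = c' i) (hdd : ∀ i ≤ k, d i = d' i) :
    build k c d = build k c' d' := by
  apply Finset.biUnion_congr rfl
  intro t ht
  rw [Finset.mem_range] at ht
  have e1 : psum c (t+1) = psum c' (t+1) := psum_congr (fun i hi => hcc i (by omega))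
  have e2 : psum d t = psum d' t := psum_congr (fun i hi => hdd i (by omega))
  have e3 : psum d (t+1) = psum d' (t+1) := psum_congr (fun i hi => hdd i (by omega))
  rw [blocks, blocks, e1, e2, e3]

end Forward

section Parse

variable {m n k : ℕ} {S : Finset ℕ}

lemma zero_not_mem_of_isDyck (hn : 1 ≤ n) (hm : 1 ≤ m) (hDy : IsDyck m n S) : 0 ∉ S := by
  intro h0
  have h := hDy 1 (by rw [Finset.mem_range]; omega)
  have hmem : 0 ∈ S ∩ Finset.range 1 := by
    rw [Finset.mem_inter, Finset.mem_range]; exact ⟨h0, by omega⟩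
  have hle : (S ∩ Finset.range 1).card ≤ 1 := by
    have h' : S ∩ Finset.range 1 ⊆ Finset.range 1 := Finset.inter_subset_right
    have := Finset.card_le_card h'
    simpa using this
  have hge : 1 ≤ (S ∩ Finset.range 1).card := Finset.card_pos.2 ⟨0, hmem⟩
  have hq : (S ∩ Finset.range 1).card = 1 := le_antisymm hle hge
  rw [hq, one_mul] at h
  simp at h
  omega

lemma last_mem_of_isDyck (hm : 1 ≤ m) (hn : 1 ≤ n) (hS : S ⊆ Finset.range (m+n))
    (hcard : S.card = m) (hDy : IsDyck m n S) : m + n - 1 ∈ S := by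
  by_contra hlast
  have hsub : S ⊆ Finset.range (m+n-1) := by
    intro i hi
    have := hS hi
    rw [Finset.mem_range] at this ⊢
    rcases Nat.lt_or_ge i (m+n-1) with h | h
    · exact h
    · exfalso; have : i = m+n-1 := by omega
      subst this; exact hlast hi
  have h := hDy (m+n-1) (by rw [Finset.mem_range]; omega)
  rw [Finset.inter_eq_left.mpr hsub, hcard] at h
  have he : m + n - 1 - m = n - 1 := by omega
  rw [he, Nat.sub_mul, one_mul, mul_comm n m] at h
  have : 0 < m * n := Nat.mul_pos hm hn
  omega

lemma window_eq_Ico {a b : ℕ}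
    (hup : ∀ i, a ≤ i → i + 1 < b → i ∈ S → i + 1 ∈ S)
    (hend : b - 1 ∈ S) (hab : a < b) :
    S ∩ Finset.Ico a b = Finset.Ico (b - (S ∩ Finset.Ico a b).card) b := by
  have hne : b - 1 ∈ S ∩ Finset.Ico a b := by
    rw [Finset.mem_inter, Finset.mem_Ico]
    exact ⟨hend, by omega, by omega⟩
  have hTne : (S ∩ Finset.Ico a b).Nonempty := ⟨_, hne⟩
  set s := (S ∩ Finset.Ico a b).min' hTne with hs
  have hsmem := (S ∩ Finset.Ico a b).min'_mem hTne
  have hsIco : a ≤ s ∧ s < b := by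
    have := Finset.mem_of_mem_inter_right hsmem
    rw [Finset.mem_Ico] at this
    exact this
  have hclosed : ∀ j, s ≤ j → j < b → j ∈ S ∩ Finset.Ico a b := by
    intro j hj
    induction j, hj using Nat.le_induction with
    | base => intro _; exact hsmem
    | succ j hj ih =>
        intro hjb
        have hjT := ih (by omega)
        rw [Finset.mem_inter, Finset.mem_Ico] at hjT
        have : j + 1 ∈ S := hup j (by omega) (by omega) hjT.1
        rw [Finset.mem_inter, Finset.mem_Ico]
        exact ⟨this, by omega, by omega⟩
  have hEq : S ∩ Finset.Ico a b = Finset.Ico s b := by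
    ext i
    constructor
    · intro hi
      have h1 := (S ∩ Finset.Ico a b).min'_le i hi
      rw [Finset.mem_inter, Finset.mem_Ico] at hi
      rw [Finset.mem_Ico]
      exact ⟨h1, hi.2.2⟩
    · intro hi
      rw [Finset.mem_Ico] at hi
      exact hclosed i hi.1 hi.2
  have hcardT : (S ∩ Finset.Ico a b).card = b - s := by rw [hEq, Nat.card_Ico]
  rw [hcardT, hEq]
  congr 1
  omega

lemma parse_core (hS : S ⊆ Finset.range (m+n)) (hcard : S.card = m)
    (hDy : IsDyck m n S) (g : ℕ → ℕ)
    (hg0 : g 0 = 0) (hgtop : g (k+1) = m+n)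
    (hgmono : ∀ s t, s < t → t ≤ k+1 → g s < g t)
    (hup : ∀ t, t ≤ k → ∀ i, g t ≤ i → i + 1 < g (t+1) → i ∈ S → i + 1 ∈ S)
    (hend : ∀ t, t ≤ k → g (t+1) - 1 ∈ S)
    (hstart : ∀ t, t ≤ k → g t ∉ S) :
    ∃ c d : ℕ → ℕ, (∀ i, 0 < c i) ∧ (∀ i, 0 < d i) ∧ psum c (k+1) = n ∧ psum d (k+1) = m
      ∧ DyckW m n k c d ∧ build k c d = S := by
  classical
  set dd : ℕ → ℕ := fun t => (S ∩ Finset.Ico (g t) (g (t+1))).card with hdd_def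
  have hwin : ∀ t, t ≤ k →
      S ∩ Finset.Ico (g t) (g (t+1)) = Finset.Ico (g (t+1) - dd t) (g (t+1)) :=
    fun t ht => window_eq_Ico (hup t ht) (hend t ht) (hgmono t (t+1) (by omega) (by omega))
  have hddpos : ∀ t, t ≤ k → 0 < dd t := by
    intro t ht
    apply Finset.card_pos.2
    refine ⟨g (t+1) - 1, ?_⟩
    rw [Finset.mem_inter, Finset.mem_Ico]
    have := hgmono t (t+1) (by omega) (by omega)
    exact ⟨hend t ht, by omega, by omega⟩
  have hddlt : ∀ t, t ≤ k → dd t < g (t+1) - g t := by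
    intro t ht
    have h1 := hgmono t (t+1) (by omega) (by omega)
    by_contra hcon
    push_neg at hcon
    have : g t ∈ Finset.Ico (g (t+1) - dd t) (g (t+1)) := by
      rw [Finset.mem_Ico]
      constructor
      · omega
      · exact h1
    rw [← hwin t ht] at this
    exact hstart t ht (Finset.mem_of_mem_inter_left this)
  set c : ℕ → ℕ := fun t => if t ≤ k then (g (t+1) - g t) - dd t else 1 with hc_def
  set d : ℕ → ℕ := fun t => if t ≤ k then dd t else 1 with hd_def
  have hcpos : ∀ i, 0 < c i := by
    intro i
    simp only [hc_def]
    by_cases h : i ≤ k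
    · rw [if_pos h]
      have := hddlt i h
      omega
    · rw [if_neg h]; omega
  have hdpos : ∀ i, 0 < d i := by
    intro i
    simp only [hd_def]
    by_cases h : i ≤ k
    · rw [if_pos h]; exact hddpos i h
    · rw [if_neg h]; omega
  have hpsum : ∀ t, t ≤ k + 1 → psum c t + psum d t = g t := by
    intro t
    induction t with
    | zero => intro _; simp [psum, hg0]
    | succ t ih =>
        intro ht
        have hih := ih (by omega)
        rw [psum_succ, psum_succ]
        have hct : c t = (g (t+1) - g t) - dd t := by simp only [hc_def]; rw [if_pos (show t ≤ k by omega)]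
        have hdt : d t = dd t := by simp only [hd_def]; rw [if_pos (show t ≤ k by omega)]
        have h1 := hddlt t (by omega)
        have h2 := hgmono t (t+1) (by omega) (by omega)
        rw [hct, hdt]
        omega
  have hblock_eq : ∀ t, t ≤ k →
      (psum c (t+1) + psum d t = g (t+1) - dd t ∧ psum c (t+1) + psum d (t+1) = g (t+1)) := by
    intro t ht
    have h1 := hpsum (t+1) (by omega)
    have h2 : psum d (t+1) = psum d t + dd t := by
      rw [psum_succ]
      have : d t = dd t := by simp only [hd_def]; rw [if_pos (show t ≤ k by omega)]
      omega
    have h3 : dd t ≤ g (t+1) := by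
      have := hddlt t ht
      have := hgmono t (t+1) (by omega) (by omega)
      omega
    constructor <;> omega
  have hbuild : build k c d = S := by
    ext i
    constructor
    · intro hi
      rw [mem_build] at hi
      obtain ⟨t, ht, h1, h2⟩ := hi
      have hb := hblock_eq t (by omega)
      have : i ∈ Finset.Ico (g (t+1) - dd t) (g (t+1)) := by
        rw [Finset.mem_Ico]
        omega
      rw [← hwin t (by omega)] at this
      exact Finset.mem_of_mem_inter_left this
    · intro hi
      have hiL : i < m + n := Finset.mem_range.1 (hS hi)
      obtain ⟨t, ht, h1, h2⟩ := exists_window_lt g hg0 (k := k) (j := i) (by omega)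
      have hb := hblock_eq t ht
      have : i ∈ S ∩ Finset.Ico (g t) (g (t+1)) := by
        rw [Finset.mem_inter, Finset.mem_Ico]
        exact ⟨hi, h1, h2⟩
      rw [hwin t ht, Finset.mem_Ico] at this
      rw [mem_build]
      exact ⟨t, by omega, by omega, by omega⟩
  have hsum_d : psum d (k+1) = m := by
    have := card_build' (k := k) (c := c) (d := d)
    rw [hbuild, hcard] at this
    omega
  have hsum_c : psum c (k+1) = n := by
    have := hpsum (k+1) le_rfl
    rw [hgtop] at this
    omega
  refine ⟨c, d, hcpos, hdpos, hsum_c, hsum_d, ?_, hbuild⟩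
  intro t ht
  have hb := hblock_eq t ht
  have hcnt : (S ∩ Finset.range (g (t+1))).card = psum d (t+1) := by
    rw [← hbuild]
    have := card_build_inter_boundary' (k := k) (d := d) hcpos (show t + 1 ≤ k + 1 by omega)
    rw [hpsum (t+1) (by omega)] at this
    exact this
  have hj := hDy (g (t+1)) (by
    rw [Finset.mem_range]
    have : g (t+1) ≤ g (k+1) := by
      rcases Nat.lt_or_ge (t+1) (k+1) with h | h
      · exact le_of_lt (hgmono (t+1) (k+1) h le_rfl)
      · have : t + 1 = k + 1 := by omega
        rw [this]
    omega)
  rw [hcnt] at hj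
  have : g (t+1) - psum d (t+1) = psum c (t+1) := by
    have := hpsum (t+1) (by omega)
    omega
  rwa [this] at hj


lemma parse (hm : 1 ≤ m) (hn : 1 ≤ n) (hS : S ⊆ Finset.range (m+n)) (hcard : S.card = m)
    (hDy : IsDyck m n S) (hk : (corners m n S).card = k) :
    ∃ c d : ℕ → ℕ, (∀ i, 0 < c i) ∧ (∀ i, 0 < d i) ∧ psum c (k+1) = n ∧ psum d (k+1) = m
      ∧ DyckW m n k c d ∧ build k c d = S := by
  classical
  set f := (corners m n S).orderEmbOfFin hk with hf
  set g : ℕ → ℕ := fun t => if h : 1 ≤ t ∧ t - 1 < k then (f ⟨t-1, h.2⟩ : ℕ) + 1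
      else if t = 0 then 0 else m + n with hg
  have hcor : ∀ i, i ∈ corners m n S → i < m+n-1 ∧ i ∈ S ∧ i+1 ∉ S := by
    intro i hi
    rw [corners, Finset.mem_filter, Finset.mem_range] at hi
    tauto
  have hfmem : ∀ j : Fin k, (f j : ℕ) ∈ corners m n S :=
    fun j => Finset.orderEmbOfFin_mem _ hk j
  have hfrange : ∀ i, i ∈ corners m n S → ∃ j : Fin k, (f j : ℕ) = i := by
    intro i hi
    have := Finset.range_orderEmbOfFin (corners m n S) hk
    have hi' : i ∈ Set.range f := by rw [this]; exact_mod_cast hi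
    obtain ⟨j, hj⟩ := hi'
    exact ⟨j, hj⟩
  have hfmono : ∀ a b : Fin k, a < b → (f a : ℕ) < f b := by
    intro a b hab
    exact f.strictMono hab
  have p0 : 0 ∉ S := zero_not_mem_of_isDyck hn hm hDy
  have p1 : m + n - 1 ∈ S := last_mem_of_isDyck hm hn hS hcard hDy
  have hg0 : g 0 = 0 := by simp [hg]
  have hgmid : ∀ t (h : t < k), g (t+1) = (f ⟨t, h⟩ : ℕ) + 1 := by
    intro t h
    simp only [hg]
    rw [dif_pos ⟨by omega, by simpa using h⟩]
    rfl
  have hgtop : g (k+1) = m + n := by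
    simp only [hg]
    rw [dif_neg (by omega), if_neg (by omega)]
  have hgval : ∀ t, 1 ≤ t → t ≤ k → ∃ (h : t - 1 < k), g t = (f ⟨t-1, h⟩ : ℕ) + 1 := by
    intro t h1 h2
    refine ⟨by omega, ?_⟩
    simp only [hg]
    rw [dif_pos ⟨h1, by omega⟩]
  have hgmono : ∀ s t, s < t → t ≤ k+1 → g s < g t := by
    intro s t hst htk
    have hgt_pos : 1 ≤ t := by omega
    rcases Nat.lt_or_ge (t-1) k with ht1 | ht1
    · obtain ⟨h', hgt⟩ := hgval t (by omega) (by omega)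
      rcases Nat.eq_zero_or_pos s with rfl | hs
      · rw [hg0, hgt]; omega
      · obtain ⟨h'', hgs⟩ := hgval s (by omega) (by omega)
        rw [hgs, hgt]
        have := hfmono ⟨s-1, h''⟩ ⟨t-1, h'⟩ (Fin.mk_lt_mk.mpr (by omega))
        omega
    · have ht : t = k + 1 := by omega
      subst ht
      rw [hgtop]
      rcases Nat.eq_zero_or_pos s with rfl | hs
      · rw [hg0]; omega
      · obtain ⟨h'', hgs⟩ := hgval s (by omega) (by omega)
        have := (hcor _ (hfmem ⟨s-1, h''⟩)).1
        rw [hgs]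
        omega
  have hup : ∀ t, t ≤ k → ∀ i, g t ≤ i → i + 1 < g (t+1) → i ∈ S → i + 1 ∈ S := by
    intro t ht i h1 h2 hiS
    by_contra hiN
    have hiL : i < m + n - 1 := by
      have : g (t+1) ≤ g (k+1) := by
        rcases Nat.lt_or_ge (t+1) (k+1) with h | h
        · exact le_of_lt (hgmono _ _ h le_rfl)
        · have : t + 1 = k + 1 := by omega
          rw [this]
      rw [hgtop] at this
      omega
    have hicor : i ∈ corners m n S := by
      rw [corners, Finset.mem_filter, Finset.mem_range]
      exact ⟨hiL, hiS, hiN⟩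
    obtain ⟨j, hj⟩ := hfrange i hicor
    -- j.val ≥ t
    have hge : t ≤ j.val := by
      rcases Nat.eq_zero_or_pos t with rfl | htpos
      · omega
      · obtain ⟨h', hgt⟩ := hgval t (by omega) ht
        by_contra hcon
        push_neg at hcon
        have hmle : (f j : ℕ) ≤ f ⟨t-1, h'⟩ :=
          f.monotone (by rw [Fin.le_def]; show (j : ℕ) ≤ t - 1; omega)
        omega
    -- j.val < t
    have hlt : j.val < t := by
      rcases Nat.lt_or_ge t k with htk | htk
      · rw [hgmid t htk] at h2
        by_contra hcon
        push_neg at hcon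
        have hmle : (f ⟨t, htk⟩ : ℕ) ≤ f j :=
          f.monotone (by rw [Fin.le_def]; show t ≤ (j : ℕ); omega)
        omega
      · have : t = k := by omega
        subst this
        exact j.2
    omega
  have hend : ∀ t, t ≤ k → g (t+1) - 1 ∈ S := by
    intro t ht
    rcases Nat.lt_or_ge t k with h | h
    · rw [hgmid t h]
      simpa using (hcor _ (hfmem ⟨t, h⟩)).2.1
    · have : t = k := by omega
      subst this
      rw [hgtop]
      exact p1
  have hstart : ∀ t, t ≤ k → g t ∉ S := by
    intro t ht
    rcases Nat.eq_zero_or_pos t with rfl | hpos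
    · rw [hg0]; exact p0
    · obtain ⟨h', hgt⟩ := hgval t (by omega) ht
      rw [hgt]
      have := (hcor _ (hfmem ⟨t-1, h'⟩)).2.2
      simpa using this
  exact parse_core hS hcard hDy g hg0 hgtop hgmono hup hend hstart


end Parse

section Cycle

variable {m n k : ℕ} {c d : ℕ → ℕ}

/-- rotation of a sequence -/
def rotf (j : ℕ) (c : ℕ → ℕ) : ℕ → ℕ := fun i => c (i + j)

lemma psum_rotf_add (c : ℕ → ℕ) (j t : ℕ) :
    psum c j + psum (rotf j c) t = psum c (j + t) := by
  induction t with
  | zero => simp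
  | succ t ih =>
      have hr : rotf j c t = c (j + t) := by simp [rotf, Nat.add_comm]
      rw [psum_succ, hr, show j + (t+1) = (j+t)+1 by omega, psum_succ, ← ih]
      omega

lemma dyck_rot_iff (j : ℕ) :
    DyckW m n k (rotf j c) (rotf j d) ↔
      ∀ t ≤ k, (psum c j : ℤ) * m - (psum d j : ℤ) * n ≤
        (psum c (j+t+1) : ℤ) * m - (psum d (j+t+1) : ℤ) * n := by
  unfold DyckW
  refine forall₂_congr fun t ht => ?_
  have h1 := psum_rotf_add c j (t+1)
  have h2 := psum_rotf_add d j (t+1)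
  have h1' : (psum c (j + (t+1)) : ℤ) = (psum c j : ℤ) + (psum (rotf j c) (t+1) : ℤ) := by
    exact_mod_cast congrArg (Nat.cast : ℕ → ℤ) h1.symm
  have h2' : (psum d (j + (t+1)) : ℤ) = (psum d j : ℤ) + (psum (rotf j d) (t+1) : ℤ) := by
    exact_mod_cast congrArg (Nat.cast : ℕ → ℤ) h2.symm
  rw [show j + t + 1 = j + (t+1) by omega, h1', h2']
  constructor
  · intro h
    have hz : (psum (rotf j d) (t+1) : ℤ) * n ≤ (psum (rotf j c) (t+1) : ℤ) * m := by
      exact_mod_cast h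
    nlinarith [hz]
  · intro h
    have hz : (psum (rotf j d) (t+1) : ℤ) * n ≤ (psum (rotf j c) (t+1) : ℤ) * m := by
      nlinarith [h]
    exact_mod_cast hz

lemma cycle_exists_unique (hm : 1 ≤ m) (hn : 1 ≤ n) (hco : Nat.Coprime m n)
    (hcper : ∀ i, c (i + (k+1)) = c i) (hdper : ∀ i, d (i + (k+1)) = d i)
    (hcpos : ∀ i, 0 < c i) (hdpos : ∀ i, 0 < d i)
    (hcs : psum c (k+1) = n) (hds : psum d (k+1) = m) :
    ∃! j : ℕ, j ≤ k ∧ DyckW m n k (rotf j c) (rotf j d) := by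
  classical
  set F : ℕ → ℤ := fun t => (psum c t : ℤ) * m - (psum d t : ℤ) * n with hF
  have hFper : ∀ t, F (t + (k+1)) = F t := by
    intro t
    have h1 : psum c (t + (k+1)) = psum c t + n := by rw [psum_add_period hcper, hcs]
    have h2 : psum d (t + (k+1)) = psum d t + m := by rw [psum_add_period hdper, hds]
    simp only [hF, h1, h2]
    push_cast
    ring
  -- equal F values at distinct indices within a period are impossible
  have hFne : ∀ j1 j2, j1 < j2 → j2 ≤ j1 + k → F j1 ≠ F j2 := by
    intro j1 j2 hlt hle hEq
    have hpc1 : j2 - j1 ≤ psum c j2 - psum c j1 := psum_diff_ge hcpos (by omega)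
    have hpd1 : j2 - j1 ≤ psum d j2 - psum d j1 := psum_diff_ge hdpos (by omega)
    have hmc : psum c j1 ≤ psum c j2 := psum_mono c (by omega)
    have hmd : psum d j1 ≤ psum d j2 := psum_mono d (by omega)
    have hup : j1 + (k+1) - j2 ≤ psum c (j1 + (k+1)) - psum c j2 :=
      psum_diff_ge hcpos (by omega)
    have hmc2 : psum c j2 ≤ psum c (j1 + (k+1)) := psum_mono c (by omega)
    have hfull : psum c (j1 + (k+1)) = psum c j1 + n := by rw [psum_add_period hcper, hcs]
    obtain ⟨pc, hpc⟩ : ∃ pc, psum c j2 = psum c j1 + pc := ⟨_, (Nat.add_sub_cancel' hmc).symm⟩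
    obtain ⟨pd, hpd⟩ : ∃ pd, psum d j2 = psum d j1 + pd := ⟨_, (Nat.add_sub_cancel' hmd).symm⟩
    have hpcn : 0 < pc ∧ pc < n := by omega
    have hkey : pc * m = pd * n := by
      have hz : (pc : ℤ) * m = (pd : ℤ) * n := by
        simp only [hF] at hEq
        rw [hpc, hpd] at hEq
        push_cast at hEq
        linarith
      exact_mod_cast hz
    have hdvd : n ∣ pc * m := ⟨pd, by rw [hkey, Nat.mul_comm]⟩
    have : n ∣ pc := (Nat.Coprime.symm hco).dvd_of_dvd_mul_right hdvd
    have := Nat.le_of_dvd hpcn.1 this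
    omega
  -- existence
  obtain ⟨j, hjmem, hjmin⟩ := Finset.exists_min_image (Finset.range (k+1)) F ⟨0, by simp⟩
  rw [Finset.mem_range] at hjmem
  have hdyck : DyckW m n k (rotf j c) (rotf j d) := by
    rw [dyck_rot_iff]
    intro t ht
    show F j ≤ F (j + t + 1)
    rcases Nat.lt_or_ge (j + t + 1) (k+1) with h | h
    · exact hjmin _ (Finset.mem_range.2 h)
    · have heq : F (j + t + 1) = F (j + t + 1 - (k+1)) := by
        have := hFper (j + t + 1 - (k+1))
        rw [show j + t + 1 - (k+1) + (k+1) = j + t + 1 by omega] at this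
        exact this
      have hle : F j ≤ F (j + t + 1 - (k+1)) :=
        hjmin _ (Finset.mem_range.2 (by omega))
      linarith [heq, hle]
  refine ⟨j, ⟨by omega, hdyck⟩, ?_⟩
  -- uniqueness
  have key : ∀ j1 j2, j1 ≤ k → j2 ≤ k → j1 < j2 →
      DyckW m n k (rotf j1 c) (rotf j1 d) → DyckW m n k (rotf j2 c) (rotf j2 d) → False := by
    intro j1 j2 hj1 hj2 hlt hD1 hD2
    rw [dyck_rot_iff] at hD1 hD2
    have hD1' : ∀ t ≤ k, F j1 ≤ F (j1 + t + 1) := hD1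
    have hD2' : ∀ t ≤ k, F j2 ≤ F (j2 + t + 1) := hD2
    have e1 : F j1 ≤ F j2 := by
      have := hD1' (j2 - j1 - 1) (by omega)
      rw [show j1 + (j2 - j1 - 1) + 1 = j2 by omega] at this
      exact this
    have e2 : F j2 ≤ F j1 := by
      have := hD2' (k - (j2 - j1)) (by omega)
      rw [show j2 + (k - (j2 - j1)) + 1 = j1 + (k+1) by omega, hFper j1] at this
      exact this
    exact hFne j1 j2 hlt (by omega) (le_antisymm e1 e2)
  intro j' ⟨hj'k, hD'⟩
  by_contra hne
  rcases Nat.lt_or_ge j' j with h | h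
  · exact key j' j hj'k (by omega) h hD' hdyck
  · exact key j j' (by omega) hj'k (by omega) hdyck hD'

end Cycle

instance (m n k : ℕ) (c d : ℕ → ℕ) : Decidable (DyckW m n k c d) := by
  unfold DyckW; exact Nat.decidableBallLE _ _

/-- tuples of `k+1` positive integers summing to `N` -/
def tupSet (k N : ℕ) : Finset (Fin (k+1) → ℕ) :=
  (Fintype.piFinset fun _ : Fin (k+1) => Finset.range (N+1)).filter
    fun c => (∀ i, 0 < c i) ∧ ∑ i, c i = N

lemma mem_tupSet {k N : ℕ} {x : Fin (k+1) → ℕ} :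
    x ∈ tupSet k N ↔ (∀ i, 0 < x i) ∧ ∑ i, x i = N := by
  rw [tupSet, Finset.mem_filter]
  constructor
  · exact fun h => h.2
  · intro h
    refine ⟨?_, h⟩
    rw [Fintype.mem_piFinset]
    intro i
    rw [Finset.mem_range]
    have := Finset.single_le_sum (fun j _ => Nat.zero_le (x j)) (Finset.mem_univ i)
    omega

def PD (m n k : ℕ) : Finset ((Fin (k+1) → ℕ) × (Fin (k+1) → ℕ)) :=
  (tupSet k n) ×ˢ (tupSet k m)

def DD (m n k : ℕ) : Finset ((Fin (k+1) → ℕ) × (Fin (k+1) → ℕ)) :=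
  (PD m n k).filter fun x => DyckW m n k (per k x.1) (per k x.2)

lemma dyckW_congr {m n k : ℕ} {c c' d d' : ℕ → ℕ} (hc : ∀ i ≤ k, c i = c' i)
    (hd : ∀ i ≤ k, d i = d' i) : DyckW m n k c d ↔ DyckW m n k c' d' := by
  unfold DyckW
  refine forall₂_congr fun t ht => ?_
  rw [psum_congr (fun i hi => hc i (by omega)), psum_congr (fun i hi => hd i (by omega))]

lemma per_le_eq {k : ℕ} (x : Fin (k+1) → ℕ) (c : ℕ → ℕ) (h : ∀ i : Fin (k+1), x i = c i.val) :
    ∀ i ≤ k, per k x i = c i := by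
  intro i hi
  rw [per_apply x (show i < k+1 by omega), h]

lemma per_tuple_eq {k : ℕ} {x y : Fin (k+1) → ℕ} (h : ∀ i ≤ k, per k x i = per k y i) :
    x = y := by
  funext i
  have h2 := h i.val (by omega)
  rwa [per_apply x i.isLt, per_apply y i.isLt] at h2

lemma mem_DD {m n k : ℕ} {x : (Fin (k+1) → ℕ) × (Fin (k+1) → ℕ)} :
    x ∈ DD m n k ↔ ((∀ i, 0 < x.1 i) ∧ ∑ i, x.1 i = n) ∧ ((∀ i, 0 < x.2 i) ∧ ∑ i, x.2 i = m)
      ∧ DyckW m n k (per k x.1) (per k x.2) := by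
  rw [DD, Finset.mem_filter, PD, Finset.mem_product, mem_tupSet, mem_tupSet]
  tauto

/-- Bijection A : Dyck paths with `k` corners are in bijection with `DD`. -/
lemma card_filter_eq_card_DD (m n k : ℕ) (hm : 1 ≤ m) (hn : 1 ≤ n) :
    (DD m n k).card = ((Finset.range (m + n)).powerset.filter fun S =>
        S.card = m ∧ IsDyck m n S ∧ (corners m n S).card = k).card := by
  refine Finset.card_bij (fun x _ => build k (per k x.1) (per k x.2)) ?_ ?_ ?_
  · intro x hx
    rw [mem_DD] at hx
    obtain ⟨⟨hc1, hc2⟩, ⟨hd1, hd2⟩, hDW⟩ := hx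
    have hcpos : ∀ i, 0 < per k x.1 i := fun i => hc1 _
    have hdpos : ∀ i, 0 < per k x.2 i := fun i => hd1 _
    have hcs : psum (per k x.1) (k+1) = n := by rw [psum_per_eq_sum, hc2]
    have hds : psum (per k x.2) (k+1) = m := by rw [psum_per_eq_sum, hd2]
    rw [Finset.mem_filter, Finset.mem_powerset]
    exact ⟨build_subset_range hcs hds, card_build hcs hds, isDyck_build hcs hds hDW,
      card_corners_build hcpos hdpos hcs hds⟩
  · intro x hx y hy hxy
    rw [mem_DD] at hx hy
    obtain ⟨⟨hc1, hc2⟩, ⟨hd1, hd2⟩, hDWx⟩ := hx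
    obtain ⟨⟨hc1', hc2'⟩, ⟨hd1', hd2'⟩, hDWy⟩ := hy
    have h := build_inj (c := per k x.1) (d := per k x.2) (c' := per k y.1) (d' := per k y.2)
      (m := m) (n := n) (fun i => hc1 _) (fun i => hd1 _)
      (by rw [psum_per_eq_sum, hc2]) (by rw [psum_per_eq_sum, hd2])
      (fun i => hc1' _) (fun i => hd1' _)
      (by rw [psum_per_eq_sum, hc2']) (by rw [psum_per_eq_sum, hd2']) hxy
    have e1 : x.1 = y.1 := per_tuple_eq (fun i hi => (h i hi).1)
    have e2 : x.2 = y.2 := per_tuple_eq (fun i hi => (h i hi).2)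
    exact Prod.ext e1 e2
  · intro S hS
    rw [Finset.mem_filter, Finset.mem_powerset] at hS
    obtain ⟨hsub, hcard, hDy, hk⟩ := hS
    obtain ⟨c, d, hcpos, hdpos, hcs, hds, hDW, hbuild⟩ := parse hm hn hsub hcard hDy hk
    refine ⟨(fun i : Fin (k+1) => c i.val, fun i : Fin (k+1) => d i.val), ?_, ?_⟩
    · rw [mem_DD]
      refine ⟨⟨fun i => hcpos _, ?_⟩, ⟨fun i => hdpos _, ?_⟩, ?_⟩
      · rw [← psum_per_eq_sum]
        rw [psum_congr (fun i hi => per_le_eq _ c (fun _ => rfl) i (by omega))]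
        exact hcs
      · rw [← psum_per_eq_sum]
        rw [psum_congr (fun i hi => per_le_eq _ d (fun _ => rfl) i (by omega))]
        exact hds
      · rw [dyckW_congr (per_le_eq _ c (fun _ => rfl)) (per_le_eq _ d (fun _ => rfl))]
        exact hDW
    · show build k (per k (fun i : Fin (k+1) => c i.val)) (per k (fun i : Fin (k+1) => d i.val)) = S
      rw [build_congr (per_le_eq _ c (fun _ => rfl)) (per_le_eq _ d (fun _ => rfl))]
      exact hbuild

/-- rotation of tuples -/
def rotT (k : ℕ) (j : Fin (k+1)) (x : Fin (k+1) → ℕ) : Fin (k+1) → ℕ := fun i => x (i + j)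

lemma per_rotT {k : ℕ} (j : Fin (k+1)) (x : Fin (k+1) → ℕ) :
    per k (rotT k j x) = rotf j.val (per k x) := by
  funext i
  simp only [per, rotT, rotf]
  congr 1
  rw [Fin.ext_iff, Fin.add_def]
  simp [Nat.mod_add_mod]

lemma rotT_rotT {k : ℕ} (j j' : Fin (k+1)) (x : Fin (k+1) → ℕ) :
    rotT k j' (rotT k j x) = rotT k (j + j') x := by
  funext i
  simp only [rotT]
  congr 1
  rw [add_assoc, add_comm j' j]

lemma rotT_zero {k : ℕ} (x : Fin (k+1) → ℕ) : rotT k 0 x = x := by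
  funext i; simp [rotT]

lemma sum_rotT {k : ℕ} (j : Fin (k+1)) (x : Fin (k+1) → ℕ) :
    ∑ i, rotT k j x i = ∑ i, x i := by
  exact Equiv.sum_comp (Equiv.addRight j) x

lemma rotT_mem_PD {m n k : ℕ} (j : Fin (k+1)) {x : (Fin (k+1) → ℕ) × (Fin (k+1) → ℕ)}
    (hx : x ∈ PD m n k) : (rotT k j x.1, rotT k j x.2) ∈ PD m n k := by
  rw [PD, Finset.mem_product, mem_tupSet, mem_tupSet] at hx ⊢
  obtain ⟨⟨h1, h2⟩, h3, h4⟩ := hx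
  exact ⟨⟨fun i => h1 _, by rw [sum_rotT]; exact h2⟩, ⟨fun i => h3 _, by rw [sum_rotT]; exact h4⟩⟩

/-- the tuple-level cycle lemma -/
lemma cycle_tuple {m n k : ℕ} (hm : 1 ≤ m) (hn : 1 ≤ n) (hco : Nat.Coprime m n)
    {x : (Fin (k+1) → ℕ) × (Fin (k+1) → ℕ)} (hx : x ∈ PD m n k) :
    ∃! j : Fin (k+1), (rotT k j x.1, rotT k j x.2) ∈ DD m n k := by
  rw [PD, Finset.mem_product, mem_tupSet, mem_tupSet] at hx
  obtain ⟨⟨hc1, hc2⟩, hd1, hd2⟩ := hx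
  have H := cycle_exists_unique (c := per k x.1) (d := per k x.2) hm hn hco
    (per_periodic x.1) (per_periodic x.2) (fun i => hc1 _) (fun i => hd1 _)
    (by rw [psum_per_eq_sum, hc2]) (by rw [psum_per_eq_sum, hd2])
  obtain ⟨j, ⟨hjk, hjD⟩, hjun⟩ := H
  refine ⟨⟨j, by omega⟩, ?_, ?_⟩
  · beta_reduce
    rw [mem_DD]
    refine ⟨⟨fun i => hc1 _, by rw [sum_rotT]; exact hc2⟩,
      ⟨fun i => hd1 _, by rw [sum_rotT]; exact hd2⟩, ?_⟩
    rw [per_rotT, per_rotT]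
    exact hjD
  · intro j' hj'
    beta_reduce at hj'
    rw [mem_DD] at hj'
    obtain ⟨_, _, hDW'⟩ := hj'
    rw [per_rotT, per_rotT] at hDW'
    have := hjun j'.val ⟨by omega, hDW'⟩
    rw [Fin.ext_iff]
    simp [this]

/-- Bijection B : `|PD| = (k+1) * |DD|`. -/
lemma card_PD_eq (m n k : ℕ) (hm : 1 ≤ m) (hn : 1 ≤ n) (hco : Nat.Coprime m n) :
    (PD m n k).card = (k+1) * (DD m n k).card := by
  have hDDsub : DD m n k ⊆ PD m n k := Finset.filter_subset _ _
  have h := Finset.card_bij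
    (s := (Finset.univ : Finset (Fin (k+1))) ×ˢ DD m n k) (t := PD m n k)
    (fun p _ => (rotT k p.1 p.2.1, rotT k p.1 p.2.2)) ?_ ?_ ?_
  · rw [Finset.card_product, Finset.card_univ, Fintype.card_fin] at h
    exact h.symm
  · intro p hp
    rw [Finset.mem_product] at hp
    exact rotT_mem_PD p.1 (hDDsub hp.2)
  · intro p hp q hq hpq
    rw [Finset.mem_product] at hp hq
    have hp2 := hp.2
    have hq2 := hq.2
    rw [Prod.mk.injEq] at hpq
    -- q.2 = rotT (p.1 - q.1) p.2
    have e1 : q.2.1 = rotT k (p.1 - q.1) p.2.1 := by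
      have := congrArg (rotT k (-q.1)) hpq.1
      rw [rotT_rotT, rotT_rotT, add_neg_cancel, rotT_zero] at this
      rw [← this, sub_eq_add_neg]
    have e2 : q.2.2 = rotT k (p.1 - q.1) p.2.2 := by
      have := congrArg (rotT k (-q.1)) hpq.2
      rw [rotT_rotT, rotT_rotT, add_neg_cancel, rotT_zero] at this
      rw [← this, sub_eq_add_neg]
    have hx : p.2 ∈ PD m n k := hDDsub hp2
    obtain ⟨j0, hj0, hj0un⟩ := cycle_tuple hm hn hco hx
    have hz : (0 : Fin (k+1)) = j0 := hj0un 0 (by beta_reduce; rw [rotT_zero, rotT_zero]; exact hp2)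
    have hd : p.1 - q.1 = j0 := hj0un (p.1 - q.1) (by beta_reduce; rw [← e1, ← e2]; exact hq2)
    have hj : p.1 = q.1 := by
      have : p.1 - q.1 = 0 := by rw [hd, ← hz]
      have := sub_eq_zero.mp this
      exact this
    have hx2 : p.2 = q.2 := by
      have h1 : q.2.1 = p.2.1 := by rw [e1, hj, sub_self, rotT_zero]
      have h2 : q.2.2 = p.2.2 := by rw [e2, hj, sub_self, rotT_zero]
      exact Prod.ext h1.symm h2.symm
    exact Prod.ext hj hx2
  · intro y hy
    obtain ⟨j, hj, _⟩ := cycle_tuple hm hn hco hy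
    refine ⟨(-j, (rotT k j y.1, rotT k j y.2)), ?_, ?_⟩
    · rw [Finset.mem_product]
      exact ⟨Finset.mem_univ _, hj⟩
    · simp only
      rw [rotT_rotT, rotT_rotT, add_neg_cancel, rotT_zero, rotT_zero]

lemma card_tupSet (k N : ℕ) (hN : 1 ≤ N) :
    (tupSet k N).card = (N-1).choose k := by
  classical
  have key : (tupSet k N).card = ((Finset.range (N-1)).powersetCard k).card := by
    refine Finset.card_bij
      (fun x _ => (Finset.univ : Finset (Fin k)).image
        (fun t => psum (per k x) (t.val + 1) - 1)) ?_ ?_ ?_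
    · intro x hx
      rw [mem_tupSet] at hx
      obtain ⟨hpos, hsum⟩ := hx
      have hpos' : ∀ i, 0 < per k x i := fun i => hpos _
      have hsumN : psum (per k x) (k+1) = N := by rw [psum_per_eq_sum, hsum]
      rw [Finset.mem_powersetCard]
      constructor
      · intro a ha
        rw [Finset.mem_image] at ha
        obtain ⟨t, _, rfl⟩ := ha
        have h1 : 0 < psum (per k x) (t.val+1) := psum_pos hpos' _
        have h2 : (k+1) - (t.val+1) ≤ psum (per k x) (k+1) - psum (per k x) (t.val+1) :=
          psum_diff_ge hpos' (by omega)
        have h3 : psum (per k x) (t.val+1) ≤ psum (per k x) (k+1) := psum_mono _ (by omega)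
        have h4 := t.isLt
        rw [Finset.mem_range]
        omega
      · rw [Finset.card_image_of_injOn, Finset.card_univ, Fintype.card_fin]
        intro t1 _ t2 _ h
        have aux : ∀ a b : Fin k, a < b →
            psum (per k x) (a.val+1) - 1 < psum (per k x) (b.val+1) - 1 := by
          intro a b hab
          have := psum_lt_psum hpos' (show a.val+1 < b.val+1 by exact_mod_cast Nat.succ_lt_succ hab)
          have h1 : 0 < psum (per k x) (a.val+1) := psum_pos hpos' _
          omega
        rcases lt_trichotomy t1 t2 with h' | h' | h'
        · exact absurd h (ne_of_lt (aux t1 t2 h'))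
        · exact h'
        · exact absurd h.symm (ne_of_lt (aux t2 t1 h'))
    · intro x hx y hy himg
      rw [mem_tupSet] at hx hy
      obtain ⟨hposx, hsumx⟩ := hx
      obtain ⟨hposy, hsumy⟩ := hy
      beta_reduce at himg
      have hposx' : ∀ i, 0 < per k x i := fun i => hposx _
      have hposy' : ∀ i, 0 < per k y i := fun i => hposy _
      set A := (Finset.univ : Finset (Fin k)).image
        (fun t => psum (per k x) (t.val + 1) - 1) with hA
      have hAcard : A.card = k := by
        rw [hA, Finset.card_image_of_injOn, Finset.card_univ, Fintype.card_fin]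
        intro t1 _ t2 _ h
        have aux : ∀ a b : Fin k, a < b →
            psum (per k x) (a.val+1) - 1 < psum (per k x) (b.val+1) - 1 := by
          intro a b hab
          have := psum_lt_psum hposx' (show a.val+1 < b.val+1 by exact_mod_cast Nat.succ_lt_succ hab)
          have h1 : 0 < psum (per k x) (a.val+1) := psum_pos hposx' _
          omega
        rcases lt_trichotomy t1 t2 with h' | h' | h'
        · exact absurd h (ne_of_lt (aux t1 t2 h'))
        · exact h'
        · exact absurd h.symm (ne_of_lt (aux t2 t1 h'))
      have hfx : (fun t : Fin k => psum (per k x) (t.val+1) - 1) = A.orderEmbOfFin hAcard := by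
        apply Finset.orderEmbOfFin_unique hAcard
        · intro t
          rw [hA, Finset.mem_image]
          exact ⟨t, Finset.mem_univ _, rfl⟩
        · intro a b hab
          have := psum_lt_psum hposx' (show a.val+1 < b.val+1 by exact_mod_cast Nat.succ_lt_succ hab)
          have h1 : 0 < psum (per k x) (a.val+1) := psum_pos hposx' _
          show psum (per k x) (a.val+1) - 1 < psum (per k x) (b.val+1) - 1
          omega
      have hfy : (fun t : Fin k => psum (per k y) (t.val+1) - 1) = A.orderEmbOfFin hAcard := by
        apply Finset.orderEmbOfFin_unique hAcard
        · intro t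
          rw [himg, Finset.mem_image]
          exact ⟨t, Finset.mem_univ _, rfl⟩
        · intro a b hab
          have := psum_lt_psum hposy' (show a.val+1 < b.val+1 by exact_mod_cast Nat.succ_lt_succ hab)
          have h1 : 0 < psum (per k y) (a.val+1) := psum_pos hposy' _
          show psum (per k y) (a.val+1) - 1 < psum (per k y) (b.val+1) - 1
          omega
      have hps : ∀ t ≤ k + 1, psum (per k x) t = psum (per k y) t := by
        intro t ht
        rcases Nat.eq_zero_or_pos t with rfl | hpos
        · simp [psum]
        rcases Nat.lt_or_ge (t-1) k with hlt | hge
        · have := congrFun (hfx.trans hfy.symm) ⟨t-1, hlt⟩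
          simp only at this
          have e1 : 0 < psum (per k x) (t-1+1) := psum_pos hposx' _
          have e1' : 0 < psum (per k y) (t-1+1) := psum_pos hposy' _
          have ht' : t - 1 + 1 = t := by omega
          rw [ht'] at this e1 e1'
          omega
        · have : t = k + 1 := by omega
          subst this
          rw [psum_per_eq_sum, psum_per_eq_sum, hsumx, hsumy]
      apply per_tuple_eq
      intro i hi
      have h1 := hps i (by omega)
      have h2 := hps (i+1) (by omega)
      rw [psum_succ, psum_succ] at h2
      omega
    · intro A hA
      rw [Finset.mem_powersetCard] at hA
      obtain ⟨hAsub, hAcard⟩ := hA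
      set f := A.orderEmbOfFin hAcard with hfdef
      set g : ℕ → ℕ := fun t => if h : 1 ≤ t ∧ t - 1 < k then (f ⟨t-1, h.2⟩ : ℕ) + 1
          else if t = 0 then 0 else N with hg
      have hfA : ∀ j : Fin k, (f j : ℕ) ∈ A := fun j => Finset.orderEmbOfFin_mem _ hAcard j
      have hfb : ∀ j : Fin k, (f j : ℕ) < N - 1 := by
        intro j
        have := hAsub (hfA j)
        rwa [Finset.mem_range] at this
      have hg0 : g 0 = 0 := by simp [hg]
      have hgtop : g (k+1) = N := by
        simp only [hg]
        rw [dif_neg (by omega), if_neg (by omega)]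
      have hgmid : ∀ t (h : t < k), g (t+1) = (f ⟨t, h⟩ : ℕ) + 1 := by
        intro t h
        simp only [hg]
        rw [dif_pos ⟨by omega, by simpa using h⟩]
        rfl
      have hgval : ∀ t, 1 ≤ t → t ≤ k → ∃ (h : t - 1 < k), g t = (f ⟨t-1, h⟩ : ℕ) + 1 := by
        intro t h1 h2
        refine ⟨by omega, ?_⟩
        simp only [hg]
        rw [dif_pos ⟨h1, by omega⟩]
      have hgmono : ∀ s t, s < t → t ≤ k+1 → g s < g t := by
        intro s t hst htk
        rcases Nat.lt_or_ge (t-1) k with ht1 | ht1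
        · obtain ⟨h', hgt⟩ := hgval t (by omega) (by omega)
          rcases Nat.eq_zero_or_pos s with rfl | hs
          · rw [hg0, hgt]; omega
          · obtain ⟨h'', hgs⟩ := hgval s (by omega) (by omega)
            rw [hgs, hgt]
            have := f.strictMono (show (⟨s-1, h''⟩ : Fin k) < ⟨t-1, h'⟩ from Fin.mk_lt_mk.mpr (by omega))
            omega
        · have ht : t = k + 1 := by omega
          subst ht
          rw [hgtop]
          rcases Nat.eq_zero_or_pos s with rfl | hs
          · rw [hg0]; omega
          · obtain ⟨h'', hgs⟩ := hgval s (by omega) (by omega)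
            have := hfb ⟨s-1, h''⟩
            rw [hgs]
            omega
      set x : Fin (k+1) → ℕ := fun i => g (i.val+1) - g i.val with hx
      have hxv : ∀ i ≤ k, per k x i = g (i+1) - g i := by
        intro i hi
        rw [per_apply x (show i < k+1 by omega)]
      have hps : ∀ t, t ≤ k+1 → psum (per k x) t = g t := by
        intro t
        induction t with
        | zero => intro _; simp [psum, hg0]
        | succ t ih =>
            intro ht
            rw [psum_succ, ih (by omega), hxv t (by omega)]
            have := hgmono t (t+1) (by omega) (by omega)
            omega
      refine ⟨x, ?_, ?_⟩
      · rw [mem_tupSet]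
        constructor
        · intro i
          have := hgmono i.val (i.val+1) (by omega) (by omega)
          simp only [hx]
          omega
        · rw [← psum_per_eq_sum, hps (k+1) le_rfl, hgtop]
      · ext a
        rw [Finset.mem_image]
        constructor
        · rintro ⟨t, _, rfl⟩
          have h1 := hps (t.val+1) (by omega)
          rw [hgmid t.val t.isLt] at h1
          rw [h1]
          simpa using hfA ⟨t.val, t.isLt⟩
        · intro ha
          have : a ∈ Set.range f := by
            rw [Finset.range_orderEmbOfFin]
            exact_mod_cast ha
          obtain ⟨j, hj⟩ := this
          refine ⟨⟨j.val, j.isLt⟩, Finset.mem_univ _, ?_⟩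
          have h1 := hps (j.val+1) (by omega)
          rw [hgmid j.val j.isLt] at h1
          rw [h1]
          simp [hj]
  rw [key, Finset.card_powersetCard, Finset.card_range]

lemma card_PD_val (m n k : ℕ) (hm : 1 ≤ m) (hn : 1 ≤ n) :
    (PD m n k).card = (n-1).choose k * (m-1).choose k := by
  rw [PD, Finset.card_product, card_tupSet k n hn, card_tupSet k m hm]

end RatDyck

/-- For coprime `m, n ≥ 1`, the number of Dyck paths in the `m × n` rectangle with
exactly `k` external corners equals `N_k = (1/(k+1)) C(m-1,k) C(n-1,k)`. -/
theorem card_dyck_paths_with_corners (m n k : ℕ) (hm : 1 ≤ m) (hn : 1 ≤ n)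
    (hco : Nat.Coprime m n) :
    ((((Finset.range (m + n)).powerset.filter fun S =>
        S.card = m ∧ IsDyck m n S ∧ (corners m n S).card = k).card : ℚ)) =
      (1 / ((k : ℚ) + 1)) * ((m - 1).choose k : ℚ) * ((n - 1).choose k : ℚ) := by
  have h1 := RatDyck.card_filter_eq_card_DD m n k hm hn
  have h2 := RatDyck.card_PD_eq m n k hm hn hco
  have h3 := RatDyck.card_PD_val m n k hm hn
  have key : (k+1) * ((Finset.range (m + n)).powerset.filter fun S =>
      S.card = m ∧ IsDyck m n S ∧ (corners m n S).card = k).card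
      = (n-1).choose k * (m-1).choose k := by
    rw [← h1, ← h2, h3]
  have kq : ((k : ℚ) + 1) ≠ 0 := by positivity
  have keyQ : ((k : ℚ) + 1) * (((Finset.range (m + n)).powerset.filter fun S =>
      S.card = m ∧ IsDyck m n S ∧ (corners m n S).card = k).card : ℚ)
      = ((n-1).choose k : ℚ) * ((m-1).choose k : ℚ) := by
    exact_mod_cast key
  have : (((Finset.range (m + n)).powerset.filter fun S =>
      S.card = m ∧ IsDyck m n S ∧ (corners m n S).card = k).card : ℚ)
      = (((n-1).choose k : ℚ) * ((m-1).choose k : ℚ)) / ((k : ℚ) + 1) := by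
    rw [eq_div_iff kq]
    linear_combination keyQ
  rw [this]
  ring
end

section
/- For integers m ≥ n ≥ 1 and 0 ≤ k ≤ n−1, setting N_l = (1/(l+1)) · C(m−1, l) · C(n−1, l), the following identity of rational numbers holds: Σ_{l=k}^{n−1} C(l, k) · N_l = (m+n−k−1)! / ( m · n · (n−k−1)! · (m−k−1)! · k! ). -/
lemma vand_aux (m k a : ℕ) :
    ∑ j ∈ Finset.range (a + 1), a.choose j * m.choose (k + 1 + j)
      = (m + a).choose (k + a + 1) := by
  rw [Nat.add_choose_eq, Finset.Nat.sum_antidiagonal_eq_sum_range_succ_mk]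
  have hsplit : Finset.range (k + a + 1 + 1)
      = Finset.Ico 0 (k + 1) ∪ Finset.Ico (k + 1) (k + a + 2) := by
    ext x; simp [Finset.mem_range, Finset.mem_Ico]; omega
  rw [hsplit, Finset.sum_union (by simp [Finset.disjoint_left]; omega)]
  have h1 : ∑ i ∈ Finset.Ico 0 (k + 1), m.choose i * a.choose (k + a + 1 - i) = 0 := by
    apply Finset.sum_eq_zero
    intro i hi
    simp only [Finset.mem_Ico] at hi
    rw [Nat.choose_eq_zero_of_lt (show a < k + a + 1 - i by omega), mul_zero]
  rw [h1, zero_add, Finset.sum_Ico_eq_sum_range]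
  apply Finset.sum_congr (by congr 1; omega)
  intro j hj
  simp only [Finset.mem_range] at hj
  rw [show k + a + 1 - (k + 1 + j) = a - j from by omega, mul_comm,
    Nat.choose_symm (by omega : j ≤ a)]

lemma core_aux (m n k : ℕ) (hn : 1 ≤ n) (hk : k ≤ n - 1) :
    ∑ l ∈ Finset.Icc k (n - 1), (n - 1 - k).choose (l - k) * m.choose (l + 1)
      = (m + (n - 1 - k)).choose n := by
  rw [show Finset.Icc k (n - 1) = Finset.Ico k n from by
      ext x; simp [Finset.mem_Icc, Finset.mem_Ico]; omega,
    Finset.sum_Ico_eq_sum_range]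
  have hv := vand_aux m k (n - 1 - k)
  rw [show k + (n - 1 - k) + 1 = n from by omega] at hv
  rw [show n - k = n - 1 - k + 1 from by omega, ← hv]
  apply Finset.sum_congr rfl
  intro j _
  rw [show k + j - k = j from by omega, show k + j + 1 = k + 1 + j from by omega]

/-- For `m ≥ n ≥ 1` and `0 ≤ k ≤ n-1`, with `N_l = (1/(l+1)) C(m-1,l) C(n-1,l)`:
`Σ_{l=k}^{n-1} C(l,k) N_l = (m+n-k-1)! / (m · n · (n-k-1)! (m-k-1)! k!)`
as rational numbers. -/
theorem narayana_sum (m n k : ℕ) (hn : 1 ≤ n) (hnm : n ≤ m) (hk : k ≤ n - 1) :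
    (∑ l ∈ Finset.Icc k (n - 1),
        (l.choose k : ℚ) *
          ((1 / ((l : ℚ) + 1)) * ((m - 1).choose l : ℚ) * ((n - 1).choose l : ℚ))) =
      (Nat.factorial (m + n - k - 1) : ℚ) /
        ((m : ℚ) * (n : ℚ) * (Nat.factorial (n - k - 1) : ℚ) *
          (Nat.factorial (m - k - 1) : ℚ) * (Nat.factorial k : ℚ)) := by
  have hm : 1 ≤ m := le_trans hn hnm
  have hm0 : (m : ℚ) ≠ 0 := Nat.cast_ne_zero.mpr (by omega)
  have hn0 : (n : ℚ) ≠ 0 := Nat.cast_ne_zero.mpr (by omega)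
  -- step 1: rewrite each summand
  have hstep : ∀ l ∈ Finset.Icc k (n - 1),
      (l.choose k : ℚ) *
          ((1 / ((l : ℚ) + 1)) * ((m - 1).choose l : ℚ) * ((n - 1).choose l : ℚ))
        = ((n - 1).choose k : ℚ) / m *
            (((n - 1 - k).choose (l - k) * m.choose (l + 1) : ℕ) : ℚ) := by
    intro l hl
    simp only [Finset.mem_Icc] at hl
    have e1 : (m : ℚ) * ((m - 1).choose l : ℚ)
        = (m.choose (l + 1) : ℚ) * ((l : ℚ) + 1) := by
      have := Nat.add_one_mul_choose_eq (m - 1) l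
      rw [Nat.sub_add_cancel hm] at this
      exact_mod_cast this
    have e2 : ((n - 1).choose l : ℚ) * (l.choose k : ℚ)
        = ((n - 1).choose k : ℚ) * ((n - 1 - k).choose (l - k) : ℚ) := by
      exact_mod_cast congrArg (Nat.cast (R := ℚ)) (Nat.choose_mul (n := n - 1) hl.1)
    have hl1 : ((l : ℚ) + 1) ≠ 0 := by positivity
    push_cast
    field_simp
    linear_combination ((l.choose k : ℚ) * ((n - 1).choose l : ℚ)) * e1 +
      ((m.choose (l + 1) : ℚ) * ((l : ℚ) + 1)) * e2
  rw [Finset.sum_congr rfl hstep, ← Finset.mul_sum, ← Nat.cast_sum,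
    core_aux m n k hn hk]
  -- step 3: final factorial computation
  have f1 := Nat.choose_mul_factorial_mul_factorial hk
  have f2 := Nat.choose_mul_factorial_mul_factorial
    (show n ≤ m + (n - 1 - k) by omega)
  rw [show m + (n - 1 - k) - n = m - k - 1 from by omega] at f2
  have f3 := Nat.mul_factorial_pred (show n ≠ 0 by omega)
  have f1q : ((n - 1).choose k : ℚ) * (k.factorial : ℚ) * ((n - 1 - k).factorial : ℚ)
      = ((n - 1).factorial : ℚ) := by exact_mod_cast congrArg (Nat.cast (R := ℚ)) f1
  have f2q : ((m + (n - 1 - k)).choose n : ℚ) * (n.factorial : ℚ) * ((m - k - 1).factorial : ℚ)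
      = ((m + (n - 1 - k)).factorial : ℚ) := by exact_mod_cast congrArg (Nat.cast (R := ℚ)) f2
  have f3q : (n : ℚ) * ((n - 1).factorial : ℚ) = (n.factorial : ℚ) := by
    exact_mod_cast congrArg (Nat.cast (R := ℚ)) f3
  rw [show m + n - k - 1 = m + (n - 1 - k) from by omega,
    show n - k - 1 = n - 1 - k from by omega]
  have hd0 : ((n - 1 - k).factorial : ℚ) ≠ 0 := Nat.cast_ne_zero.mpr (Nat.factorial_ne_zero _)
  have he0 : ((m - k - 1).factorial : ℚ) ≠ 0 := Nat.cast_ne_zero.mpr (Nat.factorial_ne_zero _)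
  have hk0 : (k.factorial : ℚ) ≠ 0 := Nat.cast_ne_zero.mpr (Nat.factorial_ne_zero _)
  field_simp
  linear_combination (((m + (n - 1 - k)).choose n : ℚ) * ((m - k - 1).factorial : ℚ) * (n : ℚ)) * f1q +
    f2q +
    (((m + (n - 1 - k)).choose n : ℚ) * ((m - k - 1).factorial : ℚ)) * f3q
end
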